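/- arXiv:1012.2281 — 5 statements merged into one kernel-verified Lean document; each statement's English description precedes it below -/
import Mathlib

section
/- Let C be the separated invariant set of an iterated function system 𝒮 = {S_1,…,S_N} in G. Then there exists a constant α_C > 0, depending only on C, such that for every nonempty finite word v one has dist(C_v, C∖C_v) ≥ α_C · diam(C_v), where dist and diam are taken with respect to the metric d. -/
open MeasureTheory Metric Set
open scoped ENNReal NNReal

/-- A family of dilations on a metric group `G`: continuous group homomorphisms
`δ r : G → G` for `r > 0` with `δ 1 = id`, scaling the metric by `r`, and
satisfying `δ (r*s) = δ r ∘ δ s`. -/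
structure Dilations (G : Type*) [MetricSpace G] [Group G] where
  δ : ℝ → G → G
  map_mul : ∀ r : ℝ, 0 < r → ∀ x y : G, δ r (x * y) = δ r x * δ r y
  continuous : ∀ r : ℝ, 0 < r → Continuous (δ r)
  map_one' : δ 1 = id
  dist_eq : ∀ r : ℝ, 0 < r → ∀ x y : G, dist (δ r x) (δ r y) = r * dist x y
  comp : ∀ r s : ℝ, 0 < r → 0 < s → δ (r * s) = δ r ∘ δ s

/-- For a word `w = [i₁, …, iₘ]`, the composition `S_{i₁} ∘ ⋯ ∘ S_{iₘ}`. -/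
def wordMap {G : Type*} {ι : Type*} (S : ι → G → G) : List ι → G → G
  | [] => id
  | i :: w => S i ∘ wordMap S w

/-- **Theorem (separation constant).** If `C` is the separated invariant set of an IFS of
similarities on a complete separable metric group with dilations, then there is `α_C > 0`
such that `dist(C_v, C∖C_v) ≥ α_C · diam(C_v)` for every nonempty finite word `v`, i.e.
`dist p y ≥ α_C · diam(C_v)` for all `p ∈ C_v` and `y ∈ C∖C_v`. -/
theorem stmt1 {G : Type*} [MetricSpace G] [Group G] [CompleteSpace G]
    [TopologicalSpace.SeparableSpace G]
    (hleft : ∀ q : G, Isometry fun x : G => q * x)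
    (D : Dilations G)
    {N : ℕ} (hN : 2 ≤ N) (q : Fin N → G) (r : Fin N → ℝ)
    (hr : ∀ i, r i ∈ Set.Ioo (0 : ℝ) 1)
    (S : Fin N → G → G) (hS : ∀ i x, S i x = q i * D.δ (r i) x)
    (C : Set G) (hCc : IsCompact C) (hCne : C.Nonempty)
    (hCinv : C = ⋃ i, S i '' C)
    (hsep : Pairwise fun i j => Disjoint (S i '' C) (S j '' C)) :
    ∃ α : ℝ, 0 < α ∧ ∀ v : List (Fin N), v ≠ [] →
      ∀ p ∈ wordMap S v '' C, ∀ y ∈ C \ wordMap S v '' C,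
        α * diam (wordMap S v '' C) ≤ dist p y := by
  haveI : Nonempty (Fin N) := ⟨⟨0, by omega⟩⟩
  -- each S i scales distance by r i
  have hSdist : ∀ i x y, dist (S i x) (S i y) = r i * dist x y := by
    intro i x y
    rw [hS, hS, (hleft (q i)).dist_eq, D.dist_eq _ (hr i).1]
  -- image of C under S i is inside C
  have hSsub : ∀ i, S i '' C ⊆ C := by
    intro i
    nth_rewrite 2 [hCinv]
    exact Set.subset_iUnion (fun j => S j '' C) i
  -- similarity ratio of a word
  set ρ : List (Fin N) → ℝ := fun v => (v.map r).prod with hρ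
  have hρnil : ρ [] = 1 := by simp [hρ]
  have hρcons : ∀ i w, ρ (i :: w) = r i * ρ w := by intro i w; simp [hρ]
  have hρpos : ∀ v, 0 < ρ v := by
    intro v; induction v with
    | nil => simp [hρnil]
    | cons i w ih => rw [hρcons]; exact mul_pos (hr i).1 ih
  have hρle : ∀ v, ρ v ≤ 1 := by
    intro v; induction v with
    | nil => simp [hρnil]
    | cons i w ih =>
      rw [hρcons]
      calc r i * ρ w ≤ 1 * 1 :=
        mul_le_mul (hr i).2.le ih (hρpos w).le zero_le_one
      _ = 1 := one_mul 1
  -- word maps scale distances by ρ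
  have hWdist : ∀ v x y, dist (wordMap S v x) (wordMap S v y) = ρ v * dist x y := by
    intro v; induction v with
    | nil => intro x y; simp [wordMap, hρnil]
    | cons i w ih =>
      intro x y
      simp only [wordMap, Function.comp_apply, hSdist, ih, hρcons, mul_assoc]
  -- images of C under word maps stay inside C
  have hWsub : ∀ v, wordMap S v '' C ⊆ C := by
    intro v; induction v with
    | nil => simp [wordMap]
    | cons i w ih =>
      rw [wordMap, Set.image_comp]
      exact (hSsub i).trans' (Set.image_mono ih)
  -- compactness of pieces
  have hScomp : ∀ i, IsCompact (S i '' C) := by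
    intro i
    refine hCc.image ?_
    have : Continuous fun x => q i * D.δ (r i) x :=
      ((hleft (q i)).continuous).comp (D.continuous _ (hr i).1)
    exact (funext (hS i) : S i = _) ▸ this
  have hSne : ∀ i, (S i '' C).Nonempty := fun i => hCne.image _
  -- separation constant between distinct pieces
  have key : ∀ p : Fin N × Fin N, ∃ ε : ℝ, 0 < ε ∧ (p.1 ≠ p.2 →
      ∀ x ∈ S p.1 '' C, ∀ y ∈ S p.2 '' C, ε ≤ dist x y) := by
    rintro ⟨i, j⟩
    by_cases hij : i = j
    · exact ⟨1, one_pos, fun h => absurd hij h⟩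
    · obtain ⟨x₀, hx₀, hmin⟩ :=
        (hScomp i).exists_isMinOn (hSne i) (continuous_infDist_pt (S j '' C)).continuousOn
      refine ⟨infDist x₀ (S j '' C), ?_, ?_⟩
      · rw [← (hScomp j).isClosed.notMem_iff_infDist_pos (hSne j)]
        exact fun h => (hsep hij).ne_of_mem hx₀ h rfl
      · intro _ x hx y hy
        exact (hmin hx).trans (infDist_le_dist_of_mem hy)
  choose ε hεpos hεsep using key
  obtain ⟨ε₀, hε₀pos, hε₀le⟩ : ∃ ε₀ : ℝ, 0 < ε₀ ∧ ∀ p : Fin N × Fin N, ε₀ ≤ ε p := by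
    refine ⟨Finset.univ.inf' Finset.univ_nonempty ε,
      ?_, fun p => Finset.inf'_le _ (Finset.mem_univ p)⟩
    rw [Finset.lt_inf'_iff]
    exact fun p _ => hεpos p
  -- diameter of C is positive
  set d₀ : ℝ := diam C with hd₀
  have i0 : Fin N := ⟨0, by omega⟩
  have i1 : Fin N := ⟨1, by omega⟩
  have hε₀d : ε₀ ≤ d₀ := by
    obtain ⟨x, hx⟩ := hSne ⟨0, by omega⟩
    obtain ⟨y, hy⟩ := hSne ⟨1, by omega⟩
    calc ε₀ ≤ ε (⟨0, by omega⟩, ⟨1, by omega⟩) := hε₀le _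
      _ ≤ dist x y := hεsep _ (by simp [Fin.ext_iff]) x hx y hy
      _ ≤ d₀ := dist_le_diam_of_mem hCc.isBounded (hSsub _ hx) (hSsub _ hy)
  have hd₀pos : 0 < d₀ := lt_of_lt_of_le hε₀pos hε₀d
  -- diameter bound for pieces
  have hdiam : ∀ v, diam (wordMap S v '' C) ≤ ρ v * d₀ := by
    intro v
    refine diam_le_of_forall_dist_le (mul_nonneg (hρpos v).le hd₀pos.le) ?_
    rintro a ⟨x, hx, rfl⟩ b ⟨y, hy, rfl⟩
    rw [hWdist]
    exact mul_le_mul_of_nonneg_left (dist_le_diam_of_mem hCc.isBounded hx hy) (hρpos v).le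
  refine ⟨ε₀ / d₀, div_pos hε₀pos hd₀pos, ?_⟩
  -- main induction
  have main : ∀ v : List (Fin N), ∀ p ∈ wordMap S v '' C, ∀ y ∈ C \ wordMap S v '' C,
      ε₀ / d₀ * (ρ v * d₀) ≤ dist p y := by
    intro v
    induction v with
    | nil =>
      rintro p hp y ⟨hy, hy2⟩
      exact absurd (by simpa [wordMap] using hy) hy2
    | cons i w ih =>
      rintro p hp y ⟨hyC, hy2⟩
      rw [wordMap, Set.image_comp] at hp hy2
      obtain ⟨p', hp', rfl⟩ := hp
      by_cases hyi : y ∈ S i '' C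
      · obtain ⟨y', hy', rfl⟩ := hyi
        have hy'w : y' ∉ wordMap S w '' C := fun h => hy2 ⟨y', h, rfl⟩
        have := ih p' hp' y' ⟨hy', hy'w⟩
        rw [hSdist, hρcons]
        calc ε₀ / d₀ * (r i * ρ w * d₀) = r i * (ε₀ / d₀ * (ρ w * d₀)) := by ring
          _ ≤ r i * dist p' y' := by
            exact mul_le_mul_of_nonneg_left this (hr i).1.le
      · obtain ⟨j, hj⟩ : ∃ j, y ∈ S j '' C := by
          rw [hCinv] at hyC; exact Set.mem_iUnion.mp hyC
        have hji : j ≠ i := fun h => hyi (h ▸ hj)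
        have hpi : S i p' ∈ S i '' C := ⟨p', hWsub w hp', rfl⟩
        have : ε₀ ≤ dist (S i p') y := by
          calc ε₀ ≤ ε (i, j) := hε₀le _
            _ ≤ dist (S i p') y := hεsep _ (Ne.symm hji) _ hpi y hj
        calc ε₀ / d₀ * (ρ (i :: w) * d₀) = ε₀ * ρ (i :: w) := by
              field_simp
          _ ≤ ε₀ * 1 := mul_le_mul_of_nonneg_left (hρle _) hε₀pos.le
          _ = ε₀ := mul_one _
          _ ≤ dist (S i p') y := this
  intro v _ p hp y hy
  calc ε₀ / d₀ * diam (wordMap S v '' C) ≤ ε₀ / d₀ * (ρ v * d₀) :=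
        mul_le_mul_of_nonneg_left (hdiam v) (div_pos hε₀pos hd₀pos).le
    _ ≤ dist p y := main v p hp y hy
end

section
/- Let 𝒮 = {S_1,…,S_N} be an iterated function system in G whose invariant set C is separated, let s > 0 satisfy 0 < ℋ^s(C) < ∞, and set μ = ℋ^s⌊C. Let K_ω be an s-homogeneous kernel, let w be a nonempty finite word, and let x ∈ C satisfy S_w(x) = x. Then for every k ∈ ℕ, ∫_{C_{w^k}∖C_{w^{k+1}}} K_ω(x,y) dμ(y) = ∫_{C∖C_w} K_ω(x,y) dμ(y), where w^k denotes the concatenation of k copies of w. -/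
open MeasureTheory Metric Set
open scoped ENNReal NNReal

/-- The concatenation `w^k` of `k` copies of the word `w`. -/
def wordPow {ι : Type*} (w : List ι) (k : ℕ) : List ι :=
  (List.replicate k w).flatten

/-- The `s`-homogeneous kernel `K_ω(x,y) = ω(x⁻¹·y) / d(x,y)^s`. -/
noncomputable def homKer {G : Type*} [MetricSpace G] [Group G] (ω : G → ℝ) (s : ℝ)
    (x y : G) : ℝ :=
  ω (x⁻¹ * y) / dist x y ^ s

/-- **Theorem (self-similarity of annular integrals).** With `μ = ℋ^s⌊C` and a fixed point
`x = S_w(x)` of an iterated similarity, for every `k ∈ ℕ`,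
`∫_{C_{w^k}∖C_{w^{k+1}}} K_ω(x,y) dμ(y) = ∫_{C∖C_w} K_ω(x,y) dμ(y)`. -/
theorem stmt2 {G : Type*} [MetricSpace G] [Group G] [CompleteSpace G]
    [TopologicalSpace.SeparableSpace G] [MeasurableSpace G] [BorelSpace G]
    (hleft : ∀ q : G, Isometry fun x : G => q * x)
    (D : Dilations G)
    {N : ℕ} (hN : 2 ≤ N) (q : Fin N → G) (r : Fin N → ℝ)
    (hr : ∀ i, r i ∈ Set.Ioo (0 : ℝ) 1)
    (S : Fin N → G → G) (hS : ∀ i x, S i x = q i * D.δ (r i) x)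
    (C : Set G) (hCc : IsCompact C) (hCne : C.Nonempty)
    (hCinv : C = ⋃ i, S i '' C)
    (hsep : Pairwise fun i j => Disjoint (S i '' C) (S j '' C))
    {s : ℝ} (hs : 0 < s) (hC0 : 0 < μH[s] C) (hC1 : μH[s] C < ⊤)
    (μ : Measure G) (hμ : μ = μH[s].restrict C)
    (ω : G → ℝ) (hωc : ContinuousOn ω {x : G | x ≠ 1})
    (hωh : ∀ x : G, x ≠ 1 → ∀ ρ : ℝ, 0 < ρ → ω (D.δ ρ x) = ω x)
    (w : List (Fin N)) (hw : w ≠ [])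
    (x : G) (hx : x ∈ C) (hfix : wordMap S w x = x) :
    ∀ k : ℕ,
      ∫ y in (wordMap S (wordPow w k) '' C) \ (wordMap S (wordPow w (k + 1)) '' C),
          homKer ω s x y ∂μ
        = ∫ y in C \ wordMap S w '' C, homKer ω s x y ∂μ := by
  -- express `wordMap S w` as a single similarity `y ↦ Q * δ ρ y`
  classical
  have hsim : ∀ u : List (Fin N), ∃ Q : G, ∃ ρ : ℝ, 0 < ρ ∧
      ∀ y, wordMap S u y = Q * D.δ ρ y := by
    intro u
    induction u with
    | nil =>
      refine ⟨1, 1, one_pos, fun y => ?_⟩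
      simp [wordMap, D.map_one']
    | cons i u ih =>
      obtain ⟨Q, ρ, hρ, h⟩ := ih
      refine ⟨q i * D.δ (r i) Q, r i * ρ, mul_pos (hr i).1 hρ, fun y => ?_⟩
      have : wordMap S (i :: u) y = S i (wordMap S u y) := rfl
      rw [this, h, hS, D.map_mul _ (hr i).1, D.comp _ _ (hr i).1 hρ]
      simp [mul_assoc]
  obtain ⟨Q, ρ, hρ, hT⟩ := hsim w
  set T : G → G := fun y => Q * D.δ ρ y with hTdef
  have hTfun : wordMap S w = T := funext hT
  -- basic facts about dilations
  have hδinv₁ : ∀ y, D.δ ρ⁻¹ (D.δ ρ y) = y := by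
    intro y
    have := D.comp ρ⁻¹ ρ (by positivity) hρ
    rw [inv_mul_cancel₀ hρ.ne', D.map_one'] at this
    exact (congrFun this y).symm
  have hδinv₂ : ∀ y, D.δ ρ (D.δ ρ⁻¹ y) = y := by
    intro y
    have := D.comp ρ ρ⁻¹ hρ (by positivity)
    rw [mul_inv_cancel₀ hρ.ne', D.map_one'] at this
    exact (congrFun this y).symm
  have hδone : D.δ ρ 1 = 1 := by
    have h := D.map_mul ρ hρ 1 1
    rw [one_mul] at h
    exact (mul_left_cancel (a := D.δ ρ 1) (by rw [mul_one]; exact h)).symm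
  have hδinv : ∀ y : G, D.δ ρ y⁻¹ = (D.δ ρ y)⁻¹ := by
    intro y
    have : D.δ ρ y⁻¹ * D.δ ρ y = 1 := by
      rw [← D.map_mul ρ hρ, inv_mul_cancel, hδone]
    exact eq_inv_of_mul_eq_one_left this
  -- T is a homeomorphism
  set Tinv : G → G := fun y => D.δ ρ⁻¹ (Q⁻¹ * y) with hTinvdef
  have hleftinv : Function.LeftInverse Tinv T := by
    intro y; simp only [hTdef, hTinvdef, inv_mul_cancel_left]; exact hδinv₁ y
  have hrightinv : Function.RightInverse Tinv T := by
    intro y; simp only [hTdef, hTinvdef, hδinv₂, mul_inv_cancel_left]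
  have hTinj : Function.Injective T := hleftinv.injective
  have hcontT : Continuous T := ((hleft Q).continuous).comp (D.continuous ρ hρ)
  have hcontTinv : Continuous Tinv :=
    (D.continuous ρ⁻¹ (by positivity)).comp ((hleft Q⁻¹).continuous)
  have hemb : MeasurableEmbedding T :=
    Homeomorph.measurableEmbedding
      { toFun := T, invFun := Tinv, left_inv := hleftinv, right_inv := hrightinv,
        continuous_toFun := hcontT, continuous_invFun := hcontTinv }
  -- distance scaling
  have hdistT : ∀ a b, dist (T a) (T b) = ρ * dist a b := by
    intro a b
    simp only [hTdef]
    rw [(hleft Q).dist_eq, D.dist_eq ρ hρ]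
  have hdistTinv : ∀ a b, dist (Tinv a) (Tinv b) = ρ⁻¹ * dist a b := by
    intro a b
    simp only [hTinvdef]
    rw [D.dist_eq ρ⁻¹ (by positivity), (hleft Q⁻¹).dist_eq]
  -- Hausdorff measure scaling
  set ρn : ℝ≥0 := ⟨ρ, hρ.le⟩ with hρn
  have hρn0 : ρn ≠ 0 := by
    simp only [hρn, ← NNReal.coe_ne_zero]; exact fun h => hρ.ne' (congrArg NNReal.toReal h)
  have hlipT : LipschitzWith ρn T := by
    refine LipschitzWith.of_dist_le_mul fun a b => ?_
    rw [hdistT]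
    exact le_of_eq rfl
  have hlipTinv : LipschitzWith ρn⁻¹ Tinv := by
    refine LipschitzWith.of_dist_le_mul fun a b => ?_
    rw [hdistTinv, NNReal.coe_inv]
    exact le_of_eq rfl
  have hρs0 : ((ρn : ℝ≥0∞) ^ s : ℝ≥0∞) ≠ 0 := by
    simp [ENNReal.rpow_eq_zero_iff, hρn0, hs, hs.ne']
  have hρstop : ((ρn : ℝ≥0∞) ^ s : ℝ≥0∞) ≠ ⊤ := by
    refine ENNReal.rpow_ne_top_of_nonneg hs.le ENNReal.coe_ne_top
  have himg : ∀ E : Set G, μH[s] (T '' E) = (ρn : ℝ≥0∞) ^ s * μH[s] E := by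
    intro E
    refine le_antisymm (hlipT.hausdorffMeasure_image_le hs.le E) ?_
    have h2 := hlipTinv.hausdorffMeasure_image_le hs.le (T '' E)
    have hback : Tinv '' (T '' E) = E := by
      rw [Set.image_image]
      simp only [hleftinv _]
      exact Set.image_id E
    rw [hback, ENNReal.coe_inv hρn0, ENNReal.inv_rpow] at h2
    calc (ρn : ℝ≥0∞) ^ s * μH[s] E
        ≤ (ρn : ℝ≥0∞) ^ s * (((ρn : ℝ≥0∞) ^ s)⁻¹ * μH[s] (T '' E)) := by
          exact mul_le_mul_right h2 _
      _ = μH[s] (T '' E) := by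
          rw [← mul_assoc, ENNReal.mul_inv_cancel hρs0 hρstop, one_mul]
  -- measure identity : μH[s] = ρ^s • map T μH[s]
  have hmapT : μH[s] = ((ρn : ℝ≥0∞) ^ s) • Measure.map T μH[s] := by
    refine Measure.ext fun E hE => ?_
    rw [Measure.smul_apply, Measure.map_apply hcontT.measurable hE, smul_eq_mul,
      ← himg, Set.image_preimage_eq E hrightinv.surjective]
  -- kernel scaling
  have hTx : T x = x := by rw [← hTfun]; exact hfix
  have hker : ∀ z : G, z ≠ x → homKer ω s x (T z) = (ρ ^ s)⁻¹ * homKer ω s x z := by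
    intro z hz
    have hxz : x⁻¹ * z ≠ 1 := by
      simp only [ne_eq, inv_mul_eq_one]
      exact fun h => hz (h.symm)
    have hxT : x⁻¹ * T z = D.δ ρ (x⁻¹ * z) := by
      have hQ : Q * D.δ ρ x = x := hTx
      have hQ' : x⁻¹ * Q = (D.δ ρ x)⁻¹ := by
        have h1 : (x⁻¹ * Q) * D.δ ρ x = 1 := by
          rw [mul_assoc, hQ, inv_mul_cancel]
        exact eq_inv_of_mul_eq_one_left h1
      calc x⁻¹ * T z = (x⁻¹ * Q) * D.δ ρ z := by simp [hTdef, mul_assoc]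
        _ = (D.δ ρ x)⁻¹ * D.δ ρ z := by rw [hQ']
        _ = D.δ ρ x⁻¹ * D.δ ρ z := by rw [hδinv]
        _ = D.δ ρ (x⁻¹ * z) := by rw [← D.map_mul ρ hρ]
    have hdist : dist x (T z) = ρ * dist x z := by
      conv_lhs => rw [← hTx]
      exact hdistT x z
    unfold homKer
    rw [hxT, hωh _ hxz ρ hρ, hdist, Real.mul_rpow hρ.le dist_nonneg,
      div_mul_eq_div_div_swap, div_eq_inv_mul]
  -- the key step: integrating over T '' A
  have key : ∀ A : Set G, MeasurableSet A → x ∉ A →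
      ∫ y in T '' A, homKer ω s x y ∂μH[s] = ∫ y in A, homKer ω s x y ∂μH[s] := by
    intro A hA hxA
    have hρsR : (0:ℝ) < ρ ^ s := Real.rpow_pos_of_pos hρ s
    calc ∫ y in T '' A, homKer ω s x y ∂μH[s]
        = ∫ y in T '' A, homKer ω s x y ∂(((ρn : ℝ≥0∞) ^ s) • Measure.map T μH[s]) := by
          rw [← hmapT]
      _ = ((ρn : ℝ≥0∞) ^ s).toReal • ∫ y in T '' A, homKer ω s x y ∂(Measure.map T μH[s]) := by
          rw [Measure.restrict_smul, integral_smul_measure]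
      _ = (ρ ^ s) • ∫ z in T ⁻¹' (T '' A), homKer ω s x (T z) ∂μH[s] := by
          rw [hemb.setIntegral_map]
          congr 1
          rw [← ENNReal.toReal_rpow]
          simp [hρn]
          exact congrArg (· ^ s) (ENNReal.coe_toReal _)
      _ = (ρ ^ s) * ∫ z in A, (ρ ^ s)⁻¹ * homKer ω s x z ∂μH[s] := by
          rw [Set.preimage_image_eq A hTinj, smul_eq_mul]
          congr 1
          refine setIntegral_congr_fun hA fun z hz => ?_
          exact hker z (fun h => hxA (h ▸ hz))
      _ = ∫ z in A, homKer ω s x z ∂μH[s] := by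
          rw [MeasureTheory.integral_const_mul, ← mul_assoc,
            mul_inv_cancel₀ hρsR.ne', one_mul]
  -- basic facts about words
  have hwordMap_append : ∀ u v : List (Fin N),
      wordMap S (u ++ v) = wordMap S u ∘ wordMap S v := by
    intro u v
    induction u with
    | nil => rfl
    | cons i u ih =>
      have h1 : wordMap S ((i :: u) ++ v) = S i ∘ wordMap S (u ++ v) := rfl
      rw [h1, ih]
      rfl
  have hpow_succ : ∀ k : ℕ, wordPow w (k + 1) = w ++ wordPow w k := by
    intro k; simp [wordPow, List.replicate_succ]
  have hcontWord : ∀ u : List (Fin N), Continuous (wordMap S u) := by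
    intro u
    induction u with
    | nil => exact continuous_id
    | cons i u ih =>
      have hSi : Continuous (S i) := by
        have : S i = fun y => q i * D.δ (r i) y := funext fun y => hS i y
        rw [this]
        exact ((hleft (q i)).continuous).comp (D.continuous _ (hr i).1)
      exact hSi.comp ih
  have hsubC : ∀ u : List (Fin N), wordMap S u '' C ⊆ C := by
    intro u
    induction u with
    | nil => simp [wordMap]
    | cons i u ih =>
      have h1 : wordMap S (i :: u) '' C = S i '' (wordMap S u '' C) := by
        rw [← Set.image_comp]; rfl
      rw [h1]
      refine subset_trans (Set.image_mono ih) ?_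
      have h2 : S i '' C ⊆ ⋃ j, S j '' C := Set.subset_iUnion (fun j => S j '' C) i
      rw [← hCinv] at h2
      exact h2
  have hcompactWord : ∀ u : List (Fin N), IsCompact (wordMap S u '' C) :=
    fun u => hCc.image (hcontWord u)
  have hmeasWord : ∀ u : List (Fin N), MeasurableSet (wordMap S u '' C) :=
    fun u => (hcompactWord u).isClosed.measurableSet
  have hfixpow : ∀ k : ℕ, wordMap S (wordPow w k) x = x := by
    intro k
    induction k with
    | zero => rfl
    | succ k ih =>
      rw [hpow_succ, hwordMap_append, Function.comp_apply, ih, hfix]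
  -- reduce integrals over μ to integrals over μH[s]
  have hμred : ∀ E : Set G, MeasurableSet E → E ⊆ C →
      ∫ y in E, homKer ω s x y ∂μ = ∫ y in E, homKer ω s x y ∂μH[s] := by
    intro E hE hEC
    rw [hμ, Measure.restrict_restrict hE, Set.inter_eq_self_of_subset_left hEC]
  -- the main induction
  intro k
  induction k with
  | zero =>
    have h0 : wordPow w 0 = ([] : List (Fin N)) := rfl
    have h1 : wordPow w 1 = w := by simp [wordPow]
    rw [h0, h1]
    simp [wordMap]
  | succ k ih =>
    have hstep : ∀ m : ℕ, wordMap S (wordPow w (m + 1)) '' C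
        = T '' (wordMap S (wordPow w m) '' C) := by
      intro m
      rw [hpow_succ, hwordMap_append, hTfun, Set.image_comp]
    set A : Set G := wordMap S (wordPow w k) '' C \ wordMap S (wordPow w (k + 1)) '' C
      with hA
    have hAmeas : MeasurableSet A :=
      (hmeasWord _).diff (hmeasWord _)
    have hAsubC : A ⊆ C := fun y hy => hsubC _ hy.1
    have hxA : x ∉ A := by
      intro hxa
      exact hxa.2 ⟨x, hx, hfixpow (k + 1)⟩
    have himgA : wordMap S (wordPow w (k + 1)) '' C \ wordMap S (wordPow w (k + 2)) '' C
        = T '' A := by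
      rw [hA, Set.image_diff hTinj, ← hstep k, ← hstep (k + 1)]
    have hTA_meas : MeasurableSet (T '' A) := by
      rw [← himgA]
      exact (hmeasWord _).diff (hmeasWord _)
    have hTA_sub : T '' A ⊆ C := by
      rw [← himgA]
      exact fun y hy => hsubC _ hy.1
    calc ∫ y in wordMap S (wordPow w (k + 1)) '' C \ wordMap S (wordPow w (k + 1 + 1)) '' C,
          homKer ω s x y ∂μ
        = ∫ y in T '' A, homKer ω s x y ∂μH[s] := by
          rw [show k + 1 + 1 = k + 2 from rfl, himgA]
          exact hμred _ hTA_meas hTA_sub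
      _ = ∫ y in A, homKer ω s x y ∂μH[s] := key A hAmeas hxA
      _ = ∫ y in A, homKer ω s x y ∂μ := (hμred _ hAmeas hAsubC).symm
      _ = ∫ y in C \ wordMap S w '' C, homKer ω s x y ∂μ := ih
end

section
/- Let C be the separated invariant set of an iterated function system in G, let s > 0 be such that μ = ℋ^s⌊C satisfies μ(B(x,ρ)) ≤ A_μ ρ^s for all x ∈ C and ρ > 0, let K_ω be an s-homogeneous kernel with ω bounded on the support of μ-relevant differences, and let α_C ∈ (0,1] be a constant with dist(C_v, C∖C_v) ≥ α_C · diam(C_v) for every nonempty finite word v. Then there is a constant A_C, depending only on C and K_ω, such that for all finite words w, v with C_v ⊂ C_w and every point p ∈ G with dist(p, C_v) ≤ (α_C/2)·diam(C_v): |∫_{C_w∖C_v} K_ω(p,y) dμ(y)| ≤ |∫_{B(p, 2 diam(C_w))∖B(p, 2 diam(C_v))} K_ω(p,y) dμ(y)| + A_C. -/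
open MeasureTheory Metric Set
open scoped ENNReal NNReal

open Bornology

lemma wordMap_image_subset {G ι : Type*} (S : ι → G → G) (C : Set G)
    (hC : ∀ i, S i '' C ⊆ C) : ∀ v : List ι, wordMap S v '' C ⊆ C := by
  intro v
  induction v with
  | nil => simp [wordMap]
  | cons i w ih =>
    have : wordMap S (i :: w) '' C = S i '' (wordMap S w '' C) := by
      rw [show wordMap S (i :: w) = S i ∘ wordMap S w from rfl, Set.image_comp]
    rw [this]
    exact (Set.image_mono ih).trans (hC i)

lemma wordMap_continuous {G ι : Type*} [TopologicalSpace G] (S : ι → G → G)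
    (hS : ∀ i, Continuous (S i)) : ∀ v : List ι, Continuous (wordMap S v) := by
  intro v
  induction v with
  | nil => exact continuous_id
  | cons i w ih => exact (hS i).comp ih

lemma wordMap_dist {G ι : Type*} [MetricSpace G] (S : ι → G → G) (r : ι → ℝ)
    (hS : ∀ i x y, dist (S i x) (S i y) = r i * dist x y) :
    ∀ (v : List ι) (x y : G),
      dist (wordMap S v x) (wordMap S v y) = (v.map r).prod * dist x y := by
  intro v
  induction v with
  | nil => simp [wordMap]
  | cons i w ih =>
    intro x y
    simp only [wordMap, Function.comp_apply, hS, ih, List.map_cons, List.prod_cons]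
    ring

/-- **Theorem (comparison of cylindrical and ball truncations).** For a separated
self-similar set `C` with `μ = ℋ^s⌊C` of growth `μ(B(x,ρ)) ≤ A_μ ρ^s`, a bounded
`s`-homogeneous kernel `K_ω`, and a separation constant `α_C ∈ (0,1]`, there is a constant
`A_C` such that for all words `w, v` with `C_v ⊆ C_w` and all points `p` with
`dist(p, C_v) ≤ (α_C/2)·diam(C_v)`:
`|∫_{C_w∖C_v} K_ω(p,y) dμ| ≤ |∫_{B(p,2diam C_w)∖B(p,2diam C_v)} K_ω(p,y) dμ| + A_C`. -/
theorem stmt3 {G : Type*} [MetricSpace G] [Group G] [CompleteSpace G]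
    [TopologicalSpace.SeparableSpace G] [MeasurableSpace G] [BorelSpace G]
    (hleft : ∀ q : G, Isometry fun x : G => q * x)
    (D : Dilations G)
    {N : ℕ} (hN : 2 ≤ N) (q : Fin N → G) (r : Fin N → ℝ)
    (hr : ∀ i, r i ∈ Set.Ioo (0 : ℝ) 1)
    (S : Fin N → G → G) (hS : ∀ i x, S i x = q i * D.δ (r i) x)
    (C : Set G) (hCc : IsCompact C) (hCne : C.Nonempty)
    (hCinv : C = ⋃ i, S i '' C)
    (hsep : Pairwise fun i j => Disjoint (S i '' C) (S j '' C))
    {s : ℝ} (hs : 0 < s)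
    (μ : Measure G) (hμ : μ = μH[s].restrict C)
    (Aμ : ℝ) (hAμ : 0 < Aμ)
    (hgrowth : ∀ x ∈ C, ∀ ρ : ℝ, 0 < ρ → μ (closedBall x ρ) ≤ ENNReal.ofReal (Aμ * ρ ^ s))
    (ω : G → ℝ) (hωc : ContinuousOn ω {x : G | x ≠ 1})
    (Mω : ℝ) (hωb : ∀ x : G, |ω x| ≤ Mω)
    (hωh : ∀ x : G, x ≠ 1 → ∀ ρ : ℝ, 0 < ρ → ω (D.δ ρ x) = ω x)
    (α : ℝ) (hα0 : 0 < α) (hα1 : α ≤ 1)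
    (hαsep : ∀ v : List (Fin N), v ≠ [] →
      ∀ p ∈ wordMap S v '' C, ∀ y ∈ C \ wordMap S v '' C,
        α * diam (wordMap S v '' C) ≤ dist p y) :
    ∃ A : ℝ, ∀ w v : List (Fin N), ∀ p : G,
      wordMap S v '' C ⊆ wordMap S w '' C →
      infDist p (wordMap S v '' C) ≤ α / 2 * diam (wordMap S v '' C) →
      |∫ y in (wordMap S w '' C) \ (wordMap S v '' C), homKer ω s p y ∂μ| ≤
        |∫ y in closedBall p (2 * diam (wordMap S w '' C)) \
            closedBall p (2 * diam (wordMap S v '' C)), homKer ω s p y ∂μ| + A := by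
  classical
  have hMω : 0 ≤ Mω := (abs_nonneg _).trans (hωb 1)
  have hScont : ∀ i, Continuous (S i) := by
    intro i
    have : S i = fun x => q i * D.δ (r i) x := funext (hS i)
    rw [this]
    exact (hleft (q i)).continuous.comp (D.continuous _ (hr i).1)
  have hSdist : ∀ i x y, dist (S i x) (S i y) = r i * dist x y := by
    intro i x y
    rw [hS, hS]
    calc dist (q i * D.δ (r i) x) (q i * D.δ (r i) y)
        = dist (D.δ (r i) x) (D.δ (r i) y) := (hleft (q i)).dist_eq _ _
      _ = r i * dist x y := D.dist_eq _ (hr i).1 _ _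
  have hSsub : ∀ i, S i '' C ⊆ C := fun i =>
    (Set.subset_iUnion (fun j => S j '' C) i).trans hCinv.symm.subset
  have hCsub : ∀ v : List (Fin N), wordMap S v '' C ⊆ C :=
    wordMap_image_subset S C hSsub
  have hwcont := wordMap_continuous S hScont
  have hwdist := wordMap_dist S r hSdist
  have hcomp : ∀ v : List (Fin N), IsCompact (wordMap S v '' C) :=
    fun v => hCc.image (hwcont v)
  -- two distinct points of C
  obtain ⟨x0, hx0⟩ := hCne.image (S ⟨0, by omega⟩)
  obtain ⟨y0, hy0⟩ := hCne.image (S ⟨1, by omega⟩)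
  have hne01 : (⟨0, by omega⟩ : Fin N) ≠ ⟨1, by omega⟩ := by simp [Fin.ext_iff]
  have hxy0 : x0 ≠ y0 := fun h =>
    Set.disjoint_left.mp (hsep hne01) hx0 (h ▸ hy0)
  have hx0C : x0 ∈ C := hSsub _ hx0
  have hy0C : y0 ∈ C := hSsub _ hy0
  have hdpos : ∀ v : List (Fin N), 0 < diam (wordMap S v '' C) := by
    intro v
    have hb : IsBounded (wordMap S v '' C) := (hcomp v).isBounded
    have hd := dist_le_diam_of_mem hb (Set.mem_image_of_mem _ hx0C)
      (Set.mem_image_of_mem _ hy0C)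
    rw [hwdist] at hd
    have hprod : 0 < (v.map r).prod := by
      apply List.prod_pos
      intro a ha
      obtain ⟨i, _, rfl⟩ := List.mem_map.mp ha
      exact (hr i).1
    have : 0 < dist x0 y0 := dist_pos.mpr hxy0
    nlinarith
  have hCae : ∀ᵐ y ∂μ, y ∈ C := by
    rw [hμ]; exact ae_restrict_mem hCc.isClosed.measurableSet
  -- continuity of the kernel away from p
  have hfc : ∀ p : G, ContinuousOn (homKer ω s p) {y : G | y ≠ p} := by
    intro p
    apply ContinuousOn.div
    · refine hωc.comp ((hleft p⁻¹).continuous.continuousOn) ?_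
      intro y hy
      simp only [Set.mem_setOf_eq] at hy ⊢
      exact fun h => hy (inv_mul_eq_one.mp h).symm
    · exact ((continuous_const.dist continuous_id).rpow_const
        (fun y => Or.inr hs.le)).continuousOn
    · intro y hy
      exact ne_of_gt (Real.rpow_pos_of_pos (dist_pos.mpr (Ne.symm hy)) s)
  have hbd : ∀ (p : G) (c : ℝ), 0 < c → ∀ y, c ≤ dist p y →
      |homKer ω s p y| ≤ Mω / c ^ s := by
    intro p c hc y hy
    have hdp : 0 < dist p y := hc.trans_le hy
    rw [homKer, abs_div, abs_of_pos (Real.rpow_pos_of_pos hdp s)]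
    exact div_le_div₀ hMω (hωb _) (Real.rpow_pos_of_pos hc s)
      (Real.rpow_le_rpow hc.le hy hs.le)
  refine ⟨2 * (Mω * Aμ * (6 / α) ^ s), ?_⟩
  intro w v p hsub hpd
  set Cv := wordMap S v '' C with hCv
  set Cw := wordMap S w '' C with hCw
  set dv := diam Cv with hdvdef
  set dw := diam Cw with hdwdef
  have hA0 : 0 ≤ 2 * (Mω * Aμ * (6 / α) ^ s) := by positivity
  by_cases hv : v = []
  · have hCwv : Cw ⊆ Cv := by
      have h0 : wordMap S ([] : List (Fin N)) '' C = C := by simp [wordMap]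
      rw [hCw, hCv, hv, h0]
      exact hCsub w
    rw [Set.diff_eq_empty.mpr hCwv, MeasureTheory.setIntegral_empty, abs_zero]
    have := abs_nonneg (∫ y in closedBall p (2 * dw) \ closedBall p (2 * dv),
      homKer ω s p y ∂μ)
    linarith
  -- main case
  have hdv : 0 < dv := hdpos v
  have hdw : 0 < dw := hdpos w
  have hdvw : dv ≤ dw := diam_mono hsub (hcomp w).isBounded
  obtain ⟨x, hxCv, hxd⟩ := (hcomp v).exists_infDist_eq_dist (hCne.image _) p
  have hpx : dist p x ≤ α / 2 * dv := by rw [← hxd]; exact hpd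
  have hpx' : dist p x ≤ dv := hpx.trans (by nlinarith)
  have hxC : x ∈ C := hCsub v hxCv
  have fact1 : ∀ y ∈ Cw, dist p y ≤ 2 * dw := by
    intro y hy
    have h1 : dist x y ≤ dw := dist_le_diam_of_mem (hcomp w).isBounded (hsub hxCv) hy
    have h2 := dist_triangle p x y
    nlinarith
  have fact2 : ∀ y ∈ C, y ∉ Cv → α / 2 * dv ≤ dist p y := by
    intro y hyC hyv
    have h1 := hαsep v hv x hxCv y ⟨hyC, hyv⟩
    have h2 := dist_triangle x p y
    rw [dist_comm x p] at h2
    linarith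
  have factCv : ∀ y ∈ Cv, dist p y ≤ 2 * dv := by
    intro y hy
    have h1 : dist x y ≤ dv := dist_le_diam_of_mem (hcomp v).isBounded hxCv hy
    have h2 := dist_triangle p x y
    nlinarith
  -- measure bounds
  have hmb : ∀ ρ : ℝ, dv ≤ ρ → μ (closedBall p (2 * ρ)) ≤ ENNReal.ofReal (Aμ * (3 * ρ) ^ s) := by
    intro ρ hρ
    have hρ0 : 0 < ρ := hdv.trans_le hρ
    have h1 : closedBall p (2 * ρ) ⊆ closedBall x (3 * ρ) := by
      intro y hy
      rw [mem_closedBall] at hy ⊢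
      have := dist_triangle y p x
      nlinarith
    exact (measure_mono h1).trans (hgrowth x hxC (3 * ρ) (by positivity))
  have hfin_w : μ (closedBall p (2 * dw)) < ∞ :=
    (hmb dw hdvw).trans_lt ENNReal.ofReal_lt_top
  -- sets
  set Dv := Cw \ Cv with hDv
  set Ann := closedBall p (2 * dw) \ closedBall p (2 * dv) with hAnn
  have mCv : MeasurableSet Cv := (hcomp v).isClosed.measurableSet
  have mCw : MeasurableSet Cw := (hcomp w).isClosed.measurableSet
  have mDv : MeasurableSet Dv := mCw.diff mCv
  have mAnn : MeasurableSet Ann :=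
    measurableSet_closedBall.diff measurableSet_closedBall
  have hDvB : Dv ⊆ closedBall p (2 * dw) := fun y hy =>
    mem_closedBall'.mpr (fact1 y hy.1)
  have hDvfin : μ Dv < ∞ := (measure_mono hDvB).trans_lt hfin_w
  have hAnnfin : μ Ann < ∞ := (measure_mono Set.diff_subset).trans_lt hfin_w
  -- integrability
  have hintOn : ∀ (E : Set G) (c : ℝ), MeasurableSet E → μ E < ∞ → 0 < c →
      (∀ y ∈ E, c ≤ dist p y) → IntegrableOn (homKer ω s p) E μ := by
    intro E c mE hEfin hc hE
    have hsub' : E ⊆ {y : G | y ≠ p} := by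
      intro y hy
      have h1 := hc.trans_le (hE y hy)
      exact fun h => by simp [h] at h1
    refine ⟨((hfc p).mono hsub').aestronglyMeasurable mE,
      HasFiniteIntegral.restrict_of_bounded (C := Mω / c ^ s) hEfin ?_⟩
    exact ae_restrict_of_forall_mem mE fun y hy => by
      simpa [Real.norm_eq_abs] using hbd p c hc y (hE y hy)
  have hIDv : IntegrableOn (homKer ω s p) Dv μ :=
    hintOn Dv (α / 2 * dv) mDv hDvfin (by positivity)
      (fun y hy => fact2 y (hCsub w hy.1) hy.2)
  have hIAnn : IntegrableOn (homKer ω s p) Ann μ :=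
    hintOn Ann (2 * dv) mAnn hAnnfin (by positivity)
      (fun y hy => by
        have := hy.2
        rw [mem_closedBall, not_le] at this
        rw [dist_comm]
        exact this.le)
  -- splitting
  have eq1 := integral_inter_add_diff (μ := μ) (f := homKer ω s p) mAnn hIDv
  have eq2 := integral_inter_add_diff (μ := μ) (f := homKer ω s p) mDv hIAnn
  rw [Set.inter_comm Ann Dv] at eq2
  -- error bounds
  have harith : ∀ ρ : ℝ, dv ≤ ρ → ∀ c : ℝ, 0 < c → c * dv ≤ α / 2 * ρ →
      True := fun _ _ _ _ _ => trivial
  have key : ∀ ρ : ℝ, 0 < ρ → Mω / (α / 2 * ρ) ^ s * (Aμ * (3 * ρ) ^ s)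
      = Mω * Aμ * (6 / α) ^ s := by
    intro ρ hρ
    have h1 : (3 * ρ) ^ s / (α / 2 * ρ) ^ s = (6 / α) ^ s := by
      rw [← Real.div_rpow (by positivity) (by positivity)]
      congr 1
      field_simp
      ring
    have h2 : Mω / (α / 2 * ρ) ^ s * (Aμ * (3 * ρ) ^ s)
        = Mω * Aμ * ((3 * ρ) ^ s / (α / 2 * ρ) ^ s) := by ring
    rw [h2, h1]
  have herr : ∀ E : Set G, MeasurableSet E → E ⊆ closedBall p (2 * dw) →
      ∀ ρ : ℝ, dv ≤ ρ → E ⊆ closedBall p (2 * ρ) → (∀ᵐ y ∂μ, y ∈ E → α / 2 * ρ ≤ dist p y) →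
      |∫ y in E, homKer ω s p y ∂μ| ≤ Mω * Aμ * (6 / α) ^ s := by
    intro E mE hEw ρ hρ hEB hEd
    have hρ0 : 0 < ρ := hdv.trans_le hρ
    have hEfin : μ E < ∞ := (measure_mono hEw).trans_lt hfin_w
    have h1 : ‖∫ y in E, homKer ω s p y ∂μ‖ ≤ Mω / (α / 2 * ρ) ^ s * (μ E).toReal := by
      refine norm_setIntegral_le_of_norm_le_const_ae' hEfin ?_
      filter_upwards [hEd] with y hy hyE
      simpa [Real.norm_eq_abs] using hbd p (α / 2 * ρ) (by positivity) y (hy hyE)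
    have h2 : (μ E).toReal ≤ Aμ * (3 * ρ) ^ s := by
      refine ENNReal.toReal_le_of_le_ofReal (by positivity) ?_
      exact (measure_mono hEB).trans (hmb ρ hρ)
    rw [Real.norm_eq_abs] at h1
    calc |∫ y in E, homKer ω s p y ∂μ| ≤ Mω / (α / 2 * ρ) ^ s * (μ E).toReal := h1
      _ ≤ Mω / (α / 2 * ρ) ^ s * (Aμ * (3 * ρ) ^ s) := by
          apply mul_le_mul_of_nonneg_left h2 (by positivity)
      _ = Mω * Aμ * (6 / α) ^ s := key ρ hρ0
  -- E1 := Dv \ Ann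
  have hE1B : Dv \ Ann ⊆ closedBall p (2 * dv) := by
    intro y hy
    have hyB2w : y ∈ closedBall p (2 * dw) := hDvB hy.1
    by_contra h
    exact hy.2 ⟨hyB2w, h⟩
  have hB1 : |∫ y in Dv \ Ann, homKer ω s p y ∂μ| ≤ Mω * Aμ * (6 / α) ^ s := by
    refine herr _ (mDv.diff mAnn) (fun y hy => hDvB hy.1) dv le_rfl hE1B ?_
    refine Filter.Eventually.of_forall fun y hy => ?_
    exact fact2 y (hCsub w hy.1.1) hy.1.2
  -- E2 := Ann \ Dv
  have hB2 : |∫ y in Ann \ Dv, homKer ω s p y ∂μ| ≤ Mω * Aμ * (6 / α) ^ s := by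
    refine herr _ (mAnn.diff mDv) (fun y hy => hy.1.1) dw hdvw
      (fun y hy => hy.1.1) ?_
    filter_upwards [hCae] with y hyC hyE
    have hynB2v : y ∉ closedBall p (2 * dv) := hyE.1.2
    have hyv : y ∉ Cv := by
      intro hyv
      exact hynB2v (mem_closedBall'.mpr (factCv y hyv))
    have hyw : y ∉ Cw := fun hyw => hyE.2 ⟨hyw, hyv⟩
    cases w with
    | nil =>
      exact absurd (by simpa [hCw, wordMap] using hyC) hyw
    | cons i w' =>
      have h1 := hαsep (i :: w') (by simp) x (hsub hxCv) y ⟨hyC, hyw⟩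
      have h2 := dist_triangle x p y
      rw [dist_comm x p] at h2
      have h3 : α / 2 * dv ≤ α / 2 * dw := by nlinarith
      rw [← hdwdef] at h1
      nlinarith
  -- combine
  have habs : |∫ y in Dv, homKer ω s p y ∂μ| ≤ |∫ y in Ann, homKer ω s p y ∂μ|
      + |∫ y in Dv \ Ann, homKer ω s p y ∂μ| + |∫ y in Ann \ Dv, homKer ω s p y ∂μ| := by
    have hdiff : (∫ y in Dv, homKer ω s p y ∂μ) - (∫ y in Ann, homKer ω s p y ∂μ)
        = (∫ y in Dv \ Ann, homKer ω s p y ∂μ) - (∫ y in Ann \ Dv, homKer ω s p y ∂μ) := by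
      linarith
    have h4 : |∫ y in Dv, homKer ω s p y ∂μ| - |∫ y in Ann, homKer ω s p y ∂μ|
        ≤ |(∫ y in Dv, homKer ω s p y ∂μ) - (∫ y in Ann, homKer ω s p y ∂μ)| :=
      abs_sub_abs_le_abs_sub _ _
    have h5 : |(∫ y in Dv \ Ann, homKer ω s p y ∂μ) - (∫ y in Ann \ Dv, homKer ω s p y ∂μ)|
        ≤ |∫ y in Dv \ Ann, homKer ω s p y ∂μ| + |∫ y in Ann \ Dv, homKer ω s p y ∂μ| :=
      abs_sub _ _
    rw [hdiff] at h4
    linarith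
  linarith
end

section
/- Let σ be a finite signed Borel measure on ℍⁿ and A_σ > 0 a constant such that |σ|(B(p,r)) ≤ A_σ r^{Q−1} for all p ∈ ℍⁿ and r > 0. Then there is a constant A, depending only on n and A_σ, such that for every p ∈ ℍⁿ, every ε > 0 and every z ∈ B(p, ε/2): ∫_{ℍⁿ∖B(p,ε)} |K(q^{-1}·p) − K(q^{-1}·z)| d|σ|(q) ≤ A. -/
open MeasureTheory Metric Set
open scoped ENNReal NNReal

/-- The Heisenberg group `ℍⁿ = ℝ^{2n+1}`, with horizontal coordinates
`a = (p_1,…,p_n)`, `b = (p_{n+1},…,p_{2n})` and vertical coordinate `t = p_{2n+1}`. -/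
@[ext] structure Heis (n : ℕ) where
  a : Fin n → ℝ
  b : Fin n → ℝ
  t : ℝ

namespace Heis

variable {n : ℕ}

/-- The symplectic form `Σ (p_i q_{i+n} − p_{i+n} q_i)`. -/
def symp (p q : Heis n) : ℝ := ∑ i, (p.a i * q.b i - p.b i * q.a i)

/-- Heisenberg group product. -/
instance : Mul (Heis n) :=
  ⟨fun p q => ⟨p.a + q.a, p.b + q.b, p.t + q.t - 2 * symp p q⟩⟩

instance : One (Heis n) := ⟨⟨0, 0, 0⟩⟩

instance : Inv (Heis n) := ⟨fun p => ⟨-p.a, -p.b, -p.t⟩⟩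

/-- `|p'|²`, the squared Euclidean norm of the horizontal part. -/
def hsq (p : Heis n) : ℝ := ∑ i, p.a i ^ 2 + ∑ i, p.b i ^ 2

/-- The Korányi norm `‖p‖ = (|p'|⁴ + p_{2n+1}²)^{1/4}`. -/
noncomputable def knorm (p : Heis n) : ℝ := (hsq p ^ 2 + p.t ^ 2) ^ ((1 : ℝ) / 4)

/-- The left-invariant Korányi distance `d(p,q) = ‖p⁻¹·q‖`. -/
noncomputable def hdist (p q : Heis n) : ℝ := knorm (p⁻¹ * q)

/-- The dilations `δ_r(p) = (r p₁, …, r p_{2n}, r² p_{2n+1})`. -/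
def dil (r : ℝ) (p : Heis n) : Heis n := ⟨r • p.a, r • p.b, r ^ 2 * p.t⟩

/-- Identification of `ℝ^{2n+1}` (as a product of standard spaces) with `Heis n`. -/
def toHeis (x : ((Fin n → ℝ) × (Fin n → ℝ)) × ℝ) : Heis n := ⟨x.1.1, x.1.2, x.2⟩

/-- Partial derivative in the direction of the coordinate `a i`. -/
noncomputable def pa (f : Heis n → ℝ) (i : Fin n) (p : Heis n) : ℝ :=
  deriv (fun s : ℝ => f ⟨Function.update p.a i s, p.b, p.t⟩) (p.a i)

/-- Partial derivative in the direction of the coordinate `b i`. -/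
noncomputable def pb (f : Heis n → ℝ) (i : Fin n) (p : Heis n) : ℝ :=
  deriv (fun s : ℝ => f ⟨p.a, Function.update p.b i s, p.t⟩) (p.b i)

/-- Partial derivative in the vertical direction. -/
noncomputable def pt (f : Heis n → ℝ) (p : Heis n) : ℝ :=
  deriv (fun s : ℝ => f ⟨p.a, p.b, s⟩) p.t

/-- The horizontal vector field `X_i = ∂_i + 2 x_{i+n} ∂_{2n+1}` applied to `f`. -/
noncomputable def Xd (f : Heis n → ℝ) (i : Fin n) (p : Heis n) : ℝ :=
  pa f i p + 2 * p.b i * pt f p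

/-- The horizontal vector field `Y_i = ∂_{i+n} − 2 x_i ∂_{2n+1}` applied to `f`. -/
noncomputable def Yd (f : Heis n → ℝ) (i : Fin n) (p : Heis n) : ℝ :=
  pb f i p - 2 * p.a i * pt f p

/-- The Euclidean norm `|∇_H f(p)|` of the horizontal gradient. -/
noncomputable def gradNorm (f : Heis n → ℝ) (p : Heis n) : ℝ :=
  Real.sqrt (∑ i, Xd f i p ^ 2 + ∑ i, Yd f i p ^ 2)

/-- The sub-Laplacian `Δ_H = Σ (X_i² + Y_i²)`. -/
noncomputable def subLap (f : Heis n → ℝ) (p : Heis n) : ℝ :=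
  ∑ i, (Xd (fun y => Xd f i y) i p + Yd (fun y => Yd f i y) i p)

/-- `C^k` smoothness of `f` on `U ⊆ Heis n`, via the identification with `ℝ^{2n+1}`. -/
def IsCk (k : ℕ∞) (f : Heis n → ℝ) (U : Set (Heis n)) : Prop :=
  ContDiffOn ℝ k (f ∘ toHeis) (toHeis ⁻¹' U)

/-- `f` is `Δ_H`-harmonic on an open set `U`: it is `C²` there and `Δ_H f = 0` on `U`. -/
def HarmonicOn (f : Heis n → ℝ) (U : Set (Heis n)) : Prop :=
  IsCk 2 f U ∧ ∀ p ∈ U, subLap f p = 0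

end Heis

namespace Heis

variable {n : ℕ}

/-- The kernel `K = ∇_H Γ`, with components
`K_i(p) = c_Q (p_i|p'|² + p_{i+n} p_{2n+1})/‖p‖^{Q+2}` (first block, `Sum.inl`) and
`K_{i+n}(p) = c_Q (p_{i+n}|p'|² − p_i p_{2n+1})/‖p‖^{Q+2}` (second block, `Sum.inr`),
where `Q = 2n+2`. -/
noncomputable def Kker (cQ : ℝ) (p : Heis n) : Fin n ⊕ Fin n → ℝ
  | Sum.inl i => cQ * (p.a i * hsq p + p.b i * p.t) / knorm p ^ (2 * n + 4)
  | Sum.inr i => cQ * (p.b i * hsq p - p.a i * p.t) / knorm p ^ (2 * n + 4)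

/-- The Euclidean norm on `ℝ^{2n}`. -/
noncomputable def eNorm (v : Fin n ⊕ Fin n → ℝ) : ℝ := Real.sqrt (∑ j, v j ^ 2)

end Heis

namespace Heis
variable {n : ℕ}

lemma mul_def (p q : Heis n) : p * q = ⟨p.a + q.a, p.b + q.b, p.t + q.t - 2 * symp p q⟩ := rfl
lemma inv_def (p : Heis n) : p⁻¹ = ⟨-p.a, -p.b, -p.t⟩ := rfl
lemma one_def : (1 : Heis n) = ⟨0, 0, 0⟩ := rfl

lemma key_assoc (q p z : Heis n) : q⁻¹ * z = (q⁻¹ * p) * (p⁻¹ * z) := by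
  ext
  · simp [mul_def, inv_def]
  · simp [mul_def, inv_def]
  · simp only [mul_def, inv_def, symp]
    have hS : (∑ i, ((-q.a) i * z.b i - (-q.b) i * z.a i)) =
        (∑ i, ((-q.a) i * p.b i - (-q.b) i * p.a i)) +
        (∑ i, ((-p.a) i * z.b i - (-p.b) i * z.a i)) +
        (∑ i, ((-q.a + p.a) i * ((-p.b) + z.b) i - ((-q.b) + p.b) i * ((-p.a) + z.a) i)) := by
      rw [← Finset.sum_add_distrib, ← Finset.sum_add_distrib]
      exact Finset.sum_congr rfl fun i _ => by simp [Pi.add_apply]; ring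
    simp only [Pi.add_apply, Pi.neg_apply] at hS ⊢
    linarith

lemma inv_mul_cancel_left' (p q : Heis n) : p⁻¹ * (p * q) = q := by
  ext
  · simp [mul_def, inv_def]
  · simp [mul_def, inv_def]
  · simp only [mul_def, inv_def, symp]
    have hS : (∑ i, ((-p.a) i * (p.b + q.b) i - (-p.b) i * (p.a + q.a) i)) =
        ∑ i, (-(p.a i * q.b i - p.b i * q.a i)) :=
      Finset.sum_congr rfl fun i _ => by simp [Pi.add_apply]; ring
    rw [Finset.sum_neg_distrib] at hS
    simp only [Pi.add_apply, Pi.neg_apply] at hS ⊢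
    linarith
end Heis

namespace Heis
lemma hsq_nonneg (p : Heis n) : 0 ≤ hsq p := by
  unfold hsq; positivity

lemma knorm_nonneg (p : Heis n) : 0 ≤ knorm p := Real.rpow_nonneg (by positivity) _

lemma knorm_pow_four (p : Heis n) : knorm p ^ 4 = hsq p ^ 2 + p.t ^ 2 := by
  rw [knorm, ← Real.rpow_natCast ((hsq p ^ 2 + p.t ^ 2) ^ ((1:ℝ)/4)) 4,
    ← Real.rpow_mul (by positivity)]
  norm_num

lemma hsq_le (p : Heis n) : hsq p ≤ knorm p ^ 2 := by
  have h4 := knorm_pow_four p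
  have h0 := hsq_nonneg p
  have h1 := knorm_nonneg p
  nlinarith [sq_nonneg p.t, sq_nonneg (hsq p - knorm p ^ 2), sq_nonneg (hsq p + knorm p ^ 2)]

lemma t_le (p : Heis n) : |p.t| ≤ knorm p ^ 2 := by
  have h4 := knorm_pow_four p
  have h1 := knorm_nonneg p
  rw [abs_le]
  constructor <;> nlinarith [sq_nonneg (hsq p), sq_nonneg (p.t - knorm p ^ 2), sq_nonneg (p.t + knorm p ^ 2)]

lemma a_le (p : Heis n) (i : Fin n) : |p.a i| ≤ knorm p := by
  have h2 : p.a i ^ 2 ≤ hsq p := by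
    unfold hsq
    have : p.a i ^ 2 ≤ ∑ j, p.a j ^ 2 :=
      Finset.single_le_sum (f := fun j => p.a j ^ 2) (fun j _ => sq_nonneg _) (Finset.mem_univ i)
    nlinarith [Finset.sum_nonneg (fun j (_ : j ∈ Finset.univ) => sq_nonneg (p.b j))]
  have := hsq_le p
  have h1 := knorm_nonneg p
  rw [abs_le]
  constructor <;> nlinarith

lemma b_le (p : Heis n) (i : Fin n) : |p.b i| ≤ knorm p := by
  have h2 : p.b i ^ 2 ≤ hsq p := by
    unfold hsq
    have : p.b i ^ 2 ≤ ∑ j, p.b j ^ 2 :=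
      Finset.single_le_sum (f := fun j => p.b j ^ 2) (fun j _ => sq_nonneg _) (Finset.mem_univ i)
    nlinarith [Finset.sum_nonneg (fun j (_ : j ∈ Finset.univ) => sq_nonneg (p.a j))]
  have := hsq_le p
  have h1 := knorm_nonneg p
  rw [abs_le]
  constructor <;> nlinarith
end Heis

lemma pow_diff_le {a b c : ℝ} (ha : 0 ≤ a) (hb : 0 ≤ b) (hac : a ≤ c) (hbc : b ≤ c)
    (K : ℕ) : |a ^ K - b ^ K| ≤ K * c ^ (K - 1) * |a - b| := by
  rw [← geom_sum₂_mul a b K, abs_mul]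
  gcongr
  calc |∑ i ∈ Finset.range K, a ^ i * b ^ (K - 1 - i)|
      ≤ ∑ i ∈ Finset.range K, |a ^ i * b ^ (K - 1 - i)| := Finset.abs_sum_le_sum_abs _ _
    _ ≤ ∑ _i ∈ Finset.range K, c ^ (K - 1) := by
        apply Finset.sum_le_sum
        intro i hi
        have hiK : i < K := Finset.mem_range.mp hi
        have hc : 0 ≤ c := ha.trans hac
        rw [abs_mul, abs_pow, abs_pow, abs_of_nonneg ha, abs_of_nonneg hb]
        calc a ^ i * b ^ (K - 1 - i) ≤ c ^ i * c ^ (K - 1 - i) := by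
              gcongr <;> positivity
          _ = c ^ (i + (K - 1 - i)) := (pow_add c i _).symm
          _ = c ^ (K - 1) := by
              congr 1
              omega
    _ = K * c ^ (K - 1) := by rw [Finset.sum_const]; simp [mul_comm]

namespace Heis
variable {n : ℕ}

lemma eNorm_le_of_forall (v : Fin n ⊕ Fin n → ℝ) (B : ℝ) (hB : 0 ≤ B)
    (h : ∀ j, |v j| ≤ B) : eNorm v ≤ 2 * n * B := by
  rcases Nat.eq_zero_or_pos n with hn | hn
  · subst hn
    have : eNorm v = 0 := by
      unfold eNorm
      rw [Finset.sum_eq_zero, Real.sqrt_zero]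
      rintro (⟨i, hi⟩ | ⟨i, hi⟩) _ <;> omega
    rw [this]; positivity
  · unfold eNorm
    rw [show (2 : ℝ) * n * B = Real.sqrt ((2 * n * B) ^ 2) from
      (Real.sqrt_sq (by positivity)).symm]
    apply Real.sqrt_le_sqrt
    calc ∑ j, v j ^ 2 ≤ ∑ _j : Fin n ⊕ Fin n, B ^ 2 := by
          apply Finset.sum_le_sum
          intro j _
          have := h j
          nlinarith [abs_nonneg (v j), sq_abs (v j)]
      _ = (2 * n) * B ^ 2 := by
          rw [Finset.sum_const, Finset.card_univ, Fintype.card_sum, Fintype.card_fin]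
          push_cast
          ring
      _ ≤ (2 * n * B) ^ 2 := by
          have h1 : (1 : ℝ) ≤ 2 * n := by
            have : (1:ℝ) ≤ (n:ℝ) := by exact_mod_cast hn
            linarith
          nlinarith
end Heis

namespace Heis

/-- explicit constant -/
noncomputable def Cn (n : ℕ) : ℝ := 24 * n + 16 * (2 * n + 4) * 2 ^ (4 * n + 7)

lemma Cn_pos (n : ℕ) : 0 < Cn n := by unfold Cn; positivity

set_option maxHeartbeats 1000000 in
lemma frac_bound (n : ℕ) (cQ m δ M u v : ℝ) (hm : 0 < m) (hδ0 : 0 ≤ δ)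
    (hMhalf : m / 2 ≤ M)
    (dg : |M ^ (2*n+4) - m ^ (2*n+4)| ≤ (2*n+4) * (2*m) ^ (2*n+3) * δ)
    (huv : |u - v| ≤ 24 * n * m ^ 2 * δ) (hv : |v| ≤ 16 * m ^ 3) :
    |cQ * u / m ^ (2*n+4) - cQ * v / M ^ (2*n+4)| ≤ |cQ| * Cn n * δ / m ^ (2*n+2) := by
  have hM0 : 0 < M := by linarith
  have E4 : (m:ℝ) ^ (2*n+4) ≠ 0 := by positivity
  have E4' : (M:ℝ) ^ (2*n+4) ≠ 0 := by positivity
  have identity : cQ * u / m ^ (2*n+4) - cQ * v / M ^ (2*n+4) =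
      cQ * (u - v) / m ^ (2*n+4) +
      cQ * v * (M ^ (2*n+4) - m ^ (2*n+4)) / (m ^ (2*n+4) * M ^ (2*n+4)) := by
    field_simp
    ring
  have Mg : (m/2) ^ (2*n+4) ≤ M ^ (2*n+4) := by gcongr
  rw [identity]
  calc |cQ * (u - v) / m ^ (2*n+4) +
        cQ * v * (M ^ (2*n+4) - m ^ (2*n+4)) / (m ^ (2*n+4) * M ^ (2*n+4))|
      ≤ |cQ * (u - v) / m ^ (2*n+4)| +
        |cQ * v * (M ^ (2*n+4) - m ^ (2*n+4)) / (m ^ (2*n+4) * M ^ (2*n+4))| := abs_add_le _ _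
    _ ≤ |cQ| * (24 * n * m ^ 2 * δ) / m ^ (2*n+4) +
        |cQ| * (16 * m ^ 3) * ((2*n+4) * (2*m) ^ (2*n+3) * δ) / (m ^ (2*n+4) * (m/2) ^ (2*n+4)) := by
      have b1 : |cQ * (u - v) / m ^ (2*n+4)| ≤ |cQ| * (24 * n * m ^ 2 * δ) / m ^ (2*n+4) := by
        rw [abs_div, abs_mul, abs_of_pos (show (0:ℝ) < m ^ (2*n+4) by positivity)]
        gcongr
      have b2 : |cQ * v * (M ^ (2*n+4) - m ^ (2*n+4)) / (m ^ (2*n+4) * M ^ (2*n+4))| ≤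
          |cQ| * (16 * m ^ 3) * ((2*n+4) * (2*m) ^ (2*n+3) * δ) /
            (m ^ (2*n+4) * (m/2) ^ (2*n+4)) := by
        rw [abs_div, abs_mul, abs_mul,
          abs_of_pos (show (0:ℝ) < m ^ (2*n+4) * M ^ (2*n+4) by positivity)]
        apply div_le_div₀ (by positivity)
        · gcongr
        · positivity
        · gcongr
      linarith
    _ = |cQ| * Cn n * δ / m ^ (2*n+2) := by
      unfold Cn
      have h1 : ((m:ℝ)/2)^(2*n+4) = m^(2*n+4)/2^(2*n+4) := by rw [div_pow]
      rw [h1]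
      field_simp
      ring

lemma mul_a (x h : Heis n) (i : Fin n) : (x * h).a i = x.a i + h.a i := rfl
lemma mul_b (x h : Heis n) (i : Fin n) : (x * h).b i = x.b i + h.b i := rfl
lemma mul_t (x h : Heis n) : (x * h).t = x.t + h.t - 2 * symp x h := rfl

set_option maxHeartbeats 1000000 in
lemma kker_comp_bound (hn : 1 ≤ n) (cQ : ℝ) (x h : Heis n)
    (hx : 0 < knorm x) (hh : knorm h ≤ knorm x / 2)
    (tri1 : knorm (x * h) ≤ knorm x + knorm h)
    (tri2 : knorm x ≤ knorm (x * h) + knorm h) :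
    ∀ j, |(Kker cQ x - Kker cQ (x * h)) j| ≤
      |cQ| * Cn n * knorm h / knorm x ^ (2 * n + 2) := by
  set m := knorm x with hm_def
  set δ := knorm h with hδ_def
  set y := x * h with hy_def
  set M := knorm y with hM_def
  have hδ0 : 0 ≤ δ := knorm_nonneg h
  have hM0 : 0 ≤ M := knorm_nonneg y
  have hn1 : (1 : ℝ) ≤ n := by exact_mod_cast hn
  have hM2 : M ≤ 2 * m := by linarith
  have hMhalf : m / 2 ≤ M := by linarith
  have hMm : |m - M| ≤ δ := by rw [abs_le]; constructor <;> linarith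
  -- difference of hsq
  have dh : |hsq x - hsq y| ≤ 6 * n * m * δ := by
    have expand : hsq x - hsq y =
        (∑ i, (x.a i ^ 2 - (x.a i + h.a i) ^ 2)) +
        (∑ i, (x.b i ^ 2 - (x.b i + h.b i) ^ 2)) := by
      unfold hsq
      rw [Finset.sum_sub_distrib, Finset.sum_sub_distrib]
      have e1 : ∀ i, y.a i = x.a i + h.a i := fun i => rfl
      have e2 : ∀ i, y.b i = x.b i + h.b i := fun i => rfl
      simp only [e1, e2]
      ring
    rw [expand]
    have term_bound : ∀ (u v : ℝ), |u| ≤ m → |v| ≤ δ → |u ^ 2 - (u + v) ^ 2| ≤ 3 * m * δ := by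
      intro u v hu hv
      have hu' := abs_le.mp hu
      have hv' := abs_le.mp hv
      rw [abs_le]
      constructor <;> nlinarith
    calc |(∑ i, (x.a i ^ 2 - (x.a i + h.a i) ^ 2)) + (∑ i, (x.b i ^ 2 - (x.b i + h.b i) ^ 2))|
        ≤ |∑ i, (x.a i ^ 2 - (x.a i + h.a i) ^ 2)| + |∑ i, (x.b i ^ 2 - (x.b i + h.b i) ^ 2)| :=
          abs_add_le _ _
      _ ≤ (∑ i, |x.a i ^ 2 - (x.a i + h.a i) ^ 2|) + (∑ i, |x.b i ^ 2 - (x.b i + h.b i) ^ 2|) := by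
          gcongr <;> exact Finset.abs_sum_le_sum_abs _ _
      _ ≤ (∑ _i : Fin n, 3 * m * δ) + (∑ _i : Fin n, 3 * m * δ) := by
          gcongr with i _ i _
          · exact term_bound _ _ (a_le x i) (a_le h i)
          · exact term_bound _ _ (b_le x i) (b_le h i)
      _ = 6 * n * m * δ := by
          simp only [Finset.sum_const, Finset.card_univ, Fintype.card_fin, nsmul_eq_mul]
          push_cast
          ring
  -- difference of t
  have dt : |x.t - y.t| ≤ 5 * n * m * δ := by
    have e : x.t - y.t = -h.t + 2 * symp x h := by rw [hy_def, mul_t]; ring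
    rw [e]
    have hsymp : |symp x h| ≤ 2 * n * m * δ := by
      unfold symp
      calc |∑ i, (x.a i * h.b i - x.b i * h.a i)|
          ≤ ∑ i, |x.a i * h.b i - x.b i * h.a i| := Finset.abs_sum_le_sum_abs _ _
        _ ≤ ∑ _i : Fin n, 2 * m * δ := by
            apply Finset.sum_le_sum
            intro i _
            have h1 := abs_le.mp (a_le x i)
            have h2 := abs_le.mp (b_le x i)
            have h3 := abs_le.mp (a_le h i)
            have h4 := abs_le.mp (b_le h i)
            rw [abs_le]
            constructor <;> nlinarith
        _ = 2 * n * m * δ := by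
            simp only [Finset.sum_const, Finset.card_univ, Fintype.card_fin, nsmul_eq_mul]
            push_cast; ring
    have ht : |h.t| ≤ δ ^ 2 := t_le h
    have hδδ : δ ^ 2 ≤ (m/2) * δ := by nlinarith
    have hnm : (m/2) * δ ≤ n * m * δ := by nlinarith [mul_nonneg hx.le hδ0]
    have habs := abs_le.mp hsymp
    have habs2 := abs_le.mp ht
    rw [abs_le]
    constructor <;> nlinarith
  -- static bounds
  have hhsqx : hsq x ≤ m ^ 2 := hsq_le x
  have hhsqx0 : 0 ≤ hsq x := hsq_nonneg x
  have hhsqy : hsq y ≤ M ^ 2 := hsq_le y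
  have hhsqy0 : 0 ≤ hsq y := hsq_nonneg y
  have htx := t_le x
  have hty := t_le y
  have dg : |M ^ (2*n+4) - m ^ (2*n+4)| ≤ (2*n+4) * (2*m) ^ (2*n+3) * δ := by
    have hpd := pow_diff_le hM0 (le_of_lt hx) hM2 (by linarith : m ≤ 2*m) (2*n+4)
    have h34 : (2*n+4) - 1 = 2*n+3 := by omega
    rw [h34] at hpd
    calc |M ^ (2*n+4) - m ^ (2*n+4)| ≤ (↑(2*n+4)) * (2*m) ^ (2*n+3) * |M - m| := hpd
      _ ≤ (2*n+4) * (2*m) ^ (2*n+3) * δ := by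
          rw [abs_sub_comm] at hMm
          push_cast
          gcongr
  -- generic numerator bounds
  have comp_diff : ∀ (xa xb ha hb ya yb : ℝ), |xa| ≤ m → |xb| ≤ m → |ha| ≤ δ → |hb| ≤ δ →
      |ya| ≤ M → |yb| ≤ M → ya = xa + ha → yb = xb + hb →
      |(xa * hsq x + xb * x.t) - (ya * hsq y + yb * y.t)| ≤ 24 * n * m ^ 2 * δ := by
    intro xa xb ha hb ya yb h1 h2 h3 h4 h5 h6 e1 e2
    have expand : (xa * hsq x + xb * x.t) - (ya * hsq y + yb * y.t) =
        (-ha) * hsq x + ya * (hsq x - hsq y) + ((-hb) * x.t + yb * (x.t - y.t)) := by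
      rw [e1, e2]; ring
    rw [expand]
    have b1 : |(-ha) * hsq x| ≤ δ * m ^ 2 := by
      rw [abs_mul, abs_neg, abs_of_nonneg hhsqx0]
      exact mul_le_mul h3 hhsqx hhsqx0 hδ0
    have b2 : |ya * (hsq x - hsq y)| ≤ (2*m) * (6 * n * m * δ) := by
      rw [abs_mul]
      exact mul_le_mul (le_trans h5 hM2) dh (abs_nonneg _) (by linarith)
    have b3 : |(-hb) * x.t| ≤ δ * m ^ 2 := by
      rw [abs_mul, abs_neg]
      exact mul_le_mul h4 htx (abs_nonneg _) hδ0
    have b4 : |yb * (x.t - y.t)| ≤ (2*m) * (5 * n * m * δ) := by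
      rw [abs_mul]
      exact mul_le_mul (le_trans h6 hM2) dt (abs_nonneg _) (by linarith)
    have slack : 0 ≤ ((n:ℝ) - 1) * (δ * m ^ 2) := by
      apply mul_nonneg (by linarith)
      positivity
    calc |(-ha) * hsq x + ya * (hsq x - hsq y) + ((-hb) * x.t + yb * (x.t - y.t))|
        ≤ |(-ha) * hsq x + ya * (hsq x - hsq y)| + |(-hb) * x.t + yb * (x.t - y.t)| := abs_add_le _ _
      _ ≤ (|(-ha) * hsq x| + |ya * (hsq x - hsq y)|) + (|(-hb) * x.t| + |yb * (x.t - y.t)|) := by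
          gcongr <;> exact abs_add_le _ _
      _ ≤ 24 * n * m ^ 2 * δ := by nlinarith
  have comp_v : ∀ (ya yb : ℝ), |ya| ≤ M → |yb| ≤ M →
      |ya * hsq y + yb * y.t| ≤ 16 * m ^ 3 := by
    intro ya yb h5 h6
    have b1 : |ya * hsq y| ≤ M * M ^ 2 := by
      rw [abs_mul, abs_of_nonneg hhsqy0]
      exact mul_le_mul h5 hhsqy hhsqy0 hM0
    have b2 : |yb * y.t| ≤ M * M ^ 2 := by
      rw [abs_mul]
      exact mul_le_mul h6 hty (abs_nonneg _) hM0
    calc |ya * hsq y + yb * y.t| ≤ |ya * hsq y| + |yb * y.t| := abs_add_le _ _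
      _ ≤ M * M ^ 2 + M * M ^ 2 := by linarith
      _ ≤ 16 * m ^ 3 := by
          have h8 : M ^ 3 ≤ (2*m) ^ 3 := by gcongr
          nlinarith
  -- per component
  intro j
  have key : ∀ u v : ℝ, |u - v| ≤ 24 * n * m ^ 2 * δ → |v| ≤ 16 * m ^ 3 →
      |cQ * u / m ^ (2*n+4) - cQ * v / M ^ (2*n+4)| ≤ |cQ| * Cn n * δ / m ^ (2*n+2) :=
    fun u v huv hv => frac_bound n cQ m δ M u v hx hδ0 hMhalf dg huv hv
  rcases j with i | i
  · have e : (Kker cQ x - Kker cQ y) (Sum.inl i) =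
        cQ * (x.a i * hsq x + x.b i * x.t) / m ^ (2*n+4) -
        cQ * (y.a i * hsq y + y.b i * y.t) / M ^ (2*n+4) := rfl
    rw [e]
    exact key _ _
      (comp_diff _ _ _ _ _ _ (a_le x i) (b_le x i) (a_le h i) (b_le h i)
        (a_le y i) (b_le y i) rfl rfl)
      (comp_v _ _ (a_le y i) (b_le y i))
  · have e : (Kker cQ x - Kker cQ y) (Sum.inr i) =
        cQ * (x.b i * hsq x + (- x.a i) * x.t) / m ^ (2*n+4) -
        cQ * (y.b i * hsq y + (- y.a i) * y.t) / M ^ (2*n+4) := by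
      show Kker cQ x (Sum.inr i) - Kker cQ y (Sum.inr i) = _
      unfold Kker
      ring
    rw [e]
    have ea : y.a i = x.a i + h.a i := rfl
    have ha1 : |(-x.a i)| ≤ m := by rw [abs_neg]; exact a_le x i
    have ha2 : |(-h.a i)| ≤ δ := by rw [abs_neg]; exact a_le h i
    have ha3 : |(-y.a i)| ≤ M := by rw [abs_neg]; exact a_le y i
    have hsum : -y.a i = -x.a i + -h.a i := by rw [ea]; ring
    exact key _ _
      (comp_diff _ _ _ _ _ _ (b_le x i) ha1 (b_le h i) ha2 (b_le y i) ha3 rfl hsum)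
      (comp_v _ _ (b_le y i) ha3)

end Heis


lemma exists_annulus {ε d : ℝ} (hε : 0 < ε) (hd : ε < d) :
    ∃ k : ℕ, 2 ^ k * ε < d ∧ d ≤ 2 ^ (k + 1) * ε := by
  have hex : ∃ m : ℕ, d ≤ 2 ^ (m + 1) * ε := by
    obtain ⟨m, hm⟩ := pow_unbounded_of_one_lt (d / ε) (by norm_num : (1:ℝ) < 2)
    rw [div_lt_iff₀ hε] at hm
    refine ⟨m, ?_⟩
    rw [pow_succ, mul_comm ((2:ℝ)^m) 2]
    nlinarith [pow_pos (by norm_num : (0:ℝ) < 2) m]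
  classical
  refine ⟨Nat.find hex, ?_, Nat.find_spec hex⟩
  rcases Nat.eq_zero_or_pos (Nat.find hex) with h0 | h0
  · rw [h0]; simpa using hd
  · have hmin := Nat.find_min hex (m := Nat.find hex - 1) (by omega)
    push_neg at hmin
    have hk : Nat.find hex - 1 + 1 = Nat.find hex := by omega
    rwa [hk] at hmin

/-- **Theorem (Hörmander-type estimate).** If `|σ|(B(p,r)) ≤ A_σ r^{Q−1}` for all `p, r`,
then there is `A` (depending only on `n`, `c_Q` and `A_σ`) such that for every `p`, every
`ε > 0` and every `z ∈ B(p, ε/2)`: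
`∫_{ℍⁿ∖B(p,ε)} |K(q⁻¹·p) − K(q⁻¹·z)| d|σ|(q) ≤ A`. -/
theorem stmt13 (n : ℕ) (hn : 1 ≤ n) [MetricSpace (Heis n)]
    (hdist_eq : ∀ p q : Heis n, dist p q = Heis.hdist p q)
    [MeasurableSpace (Heis n)] [BorelSpace (Heis n)]
    (cQ : ℝ) (Aσ : ℝ) (hAσ : 0 < Aσ)
    (σ : MeasureTheory.SignedMeasure (Heis n))
    (hgrow : ∀ (p : Heis n) (r : ℝ), 0 < r →
      σ.totalVariation (Metric.closedBall p r) ≤ ENNReal.ofReal (Aσ * r ^ (2 * n + 1))) :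
    ∃ A : ℝ, ∀ (p : Heis n) (ε : ℝ), 0 < ε → ∀ z ∈ Metric.closedBall p (ε / 2),
      ∫⁻ q in (Metric.closedBall p ε)ᶜ,
          ENNReal.ofReal
            (Heis.eNorm (Heis.Kker cQ (q⁻¹ * p) - Heis.Kker cQ (q⁻¹ * z)))
          ∂σ.totalVariation
        ≤ ENNReal.ofReal A := by
  classical
  have hCn := Heis.Cn_pos n
  set C0 : ℝ := 2 * n * (|cQ| * Heis.Cn n) with hC0_def
  have hC0 : 0 ≤ C0 := by
    apply mul_nonneg (by positivity)
    exact mul_nonneg (abs_nonneg _) hCn.le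
  set B : ℝ := C0 * Aσ * 2 ^ (2 * n) with hB_def
  have hB : 0 ≤ B := by
    apply mul_nonneg (mul_nonneg hC0 hAσ.le)
    positivity
  refine ⟨2 * B, ?_⟩
  intro p ε hε z hz
  have hdz : dist p z ≤ ε / 2 := by rw [dist_comm]; exact mem_closedBall.mp hz
  have hknorm_h : Heis.knorm (p⁻¹ * z) = dist p z := (hdist_eq p z).symm
  -- pointwise bound
  have point : ∀ q : Heis n, ε < dist q p →
      Heis.eNorm (Heis.Kker cQ (q⁻¹ * p) - Heis.Kker cQ (q⁻¹ * z)) ≤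
        C0 * (ε / 2) / dist q p ^ (2 * n + 2) := by
    intro q hq
    have hx : Heis.knorm (q⁻¹ * p) = dist q p := (hdist_eq q p).symm
    have hxz : Heis.knorm (q⁻¹ * z) = dist q z := (hdist_eq q z).symm
    have hxh : q⁻¹ * z = (q⁻¹ * p) * (p⁻¹ * z) := Heis.key_assoc q p z
    have hm : 0 < Heis.knorm (q⁻¹ * p) := by rw [hx]; linarith
    have hhm : Heis.knorm (p⁻¹ * z) ≤ Heis.knorm (q⁻¹ * p) / 2 := by
      rw [hx, hknorm_h]; linarith
    have tri1 : Heis.knorm ((q⁻¹ * p) * (p⁻¹ * z)) ≤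
        Heis.knorm (q⁻¹ * p) + Heis.knorm (p⁻¹ * z) := by
      rw [← hxh, hx, hxz, hknorm_h]
      exact dist_triangle q p z
    have tri2 : Heis.knorm (q⁻¹ * p) ≤
        Heis.knorm ((q⁻¹ * p) * (p⁻¹ * z)) + Heis.knorm (p⁻¹ * z) := by
      rw [← hxh, hx, hxz, hknorm_h]
      calc dist q p ≤ dist q z + dist z p := dist_triangle q z p
        _ = dist q z + dist p z := by rw [dist_comm z p]
    have comp := Heis.kker_comp_bound hn cQ (q⁻¹ * p) (p⁻¹ * z) hm hhm tri1 tri2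
    have hBc : 0 ≤ |cQ| * Heis.Cn n * Heis.knorm (p⁻¹ * z) / Heis.knorm (q⁻¹ * p) ^ (2*n+2) := by
      apply div_nonneg _ (by positivity)
      exact mul_nonneg (mul_nonneg (abs_nonneg _) hCn.le) (Heis.knorm_nonneg _)
    rw [hxh]
    calc Heis.eNorm (Heis.Kker cQ (q⁻¹ * p) - Heis.Kker cQ ((q⁻¹ * p) * (p⁻¹ * z)))
        ≤ 2 * n * (|cQ| * Heis.Cn n * Heis.knorm (p⁻¹ * z) / Heis.knorm (q⁻¹ * p) ^ (2*n+2)) :=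
          Heis.eNorm_le_of_forall _ _ hBc comp
      _ = C0 * Heis.knorm (p⁻¹ * z) / Heis.knorm (q⁻¹ * p) ^ (2*n+2) := by
          rw [hC0_def]; ring
      _ ≤ C0 * (ε / 2) / dist q p ^ (2 * n + 2) := by
          rw [hx, hknorm_h]
          have hd : (0:ℝ) < dist q p ^ (2*n+2) := by
            have h0 : (0:ℝ) < dist q p := lt_trans hε hq
            positivity
          exact (div_le_div_iff_of_pos_right hd).mpr (mul_le_mul_of_nonneg_left hdz hC0)
  -- annuli
  set S : ℕ → Set (Heis n) := fun k =>
    Metric.closedBall p (2 ^ (k+1) * ε) \ Metric.closedBall p (2 ^ k * ε) with hS_def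
  have hcover : (Metric.closedBall p ε)ᶜ ⊆ ⋃ k, S k := by
    intro q hq
    have hdq : ε < dist q p := by
      rw [Set.mem_compl_iff, Metric.mem_closedBall, not_le] at hq
      exact hq
    obtain ⟨k, h1, h2⟩ := exists_annulus hε hdq
    refine Set.mem_iUnion.mpr ⟨k, ?_, ?_⟩
    · rw [Metric.mem_closedBall]; exact h2
    · rw [Metric.mem_closedBall, not_le]; exact h1
  have hone_le : ∀ k : ℕ, ε ≤ 2 ^ k * ε := by
    intro k
    nlinarith [one_le_pow₀ (by norm_num : (1:ℝ) ≤ 2) (n := k), hε]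
  calc ∫⁻ q in (Metric.closedBall p ε)ᶜ,
        ENNReal.ofReal (Heis.eNorm (Heis.Kker cQ (q⁻¹ * p) - Heis.Kker cQ (q⁻¹ * z)))
        ∂σ.totalVariation
      ≤ ∑' k, ∫⁻ q in S k,
          ENNReal.ofReal (Heis.eNorm (Heis.Kker cQ (q⁻¹ * p) - Heis.Kker cQ (q⁻¹ * z)))
          ∂σ.totalVariation :=
        le_trans (lintegral_mono_set hcover) (lintegral_iUnion_le _ _)
    _ ≤ ∑' k, ENNReal.ofReal (B * (1/2) ^ k) := by
        apply ENNReal.tsum_le_tsum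
        intro k
        have hSmeas : MeasurableSet (S k) :=
          measurableSet_closedBall.diff measurableSet_closedBall
        have hptw : ∀ q ∈ S k,
            ENNReal.ofReal (Heis.eNorm (Heis.Kker cQ (q⁻¹ * p) - Heis.Kker cQ (q⁻¹ * z))) ≤
            ENNReal.ofReal (C0 * (ε/2) / (2 ^ k * ε) ^ (2*n+2)) := by
          intro q hq
          obtain ⟨hq1, hq2⟩ := hq
          have hd1 : 2 ^ k * ε < dist q p := by
            rw [Metric.mem_closedBall, not_le] at hq2
            exact hq2
          have hd0 : ε < dist q p := lt_of_le_of_lt (hone_le k) hd1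
          apply ENNReal.ofReal_le_ofReal
          calc Heis.eNorm (Heis.Kker cQ (q⁻¹ * p) - Heis.Kker cQ (q⁻¹ * z))
              ≤ C0 * (ε / 2) / dist q p ^ (2 * n + 2) := point q hd0
            _ ≤ C0 * (ε/2) / (2 ^ k * ε) ^ (2*n+2) := by
                gcongr
                all_goals
                  first
                  | positivity
                  | exact mul_nonneg hC0 (by positivity)
                  | exact hd1.le
        calc ∫⁻ q in S k,
              ENNReal.ofReal (Heis.eNorm (Heis.Kker cQ (q⁻¹ * p) - Heis.Kker cQ (q⁻¹ * z)))
              ∂σ.totalVariation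
            ≤ ENNReal.ofReal (C0 * (ε/2) / (2 ^ k * ε) ^ (2*n+2)) * σ.totalVariation (S k) :=
              (setLIntegral_mono' hSmeas hptw).trans_eq (setLIntegral_const _ _)
          _ ≤ ENNReal.ofReal (C0 * (ε/2) / (2 ^ k * ε) ^ (2*n+2)) *
              ENNReal.ofReal (Aσ * (2 ^ (k+1) * ε) ^ (2*n+1)) := by
              gcongr
              exact le_trans (measure_mono Set.diff_subset) (hgrow p _ (by positivity))
          _ = ENNReal.ofReal ((C0 * (ε/2) / (2 ^ k * ε) ^ (2*n+2)) *
              (Aσ * (2 ^ (k+1) * ε) ^ (2*n+1))) := by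
              rw [← ENNReal.ofReal_mul]
              apply div_nonneg (mul_nonneg hC0 (by positivity))
              positivity
          _ ≤ ENNReal.ofReal (B * (1/2) ^ k) := by
              apply ENNReal.ofReal_le_ofReal
              rw [hB_def]
              apply le_of_eq
              have h1 : ((2:ℝ) ^ k * ε) ^ (2*n+2) ≠ 0 := by positivity
              rw [one_div_pow]
              field_simp
              ring
    _ = ENNReal.ofReal (2 * B) := by
        have hsplit : ∀ k : ℕ, ENNReal.ofReal (B * (1/2) ^ k) =
            ENNReal.ofReal B * ENNReal.ofReal ((1/2 : ℝ) ^ k) := fun k =>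
          ENNReal.ofReal_mul hB
        have hgeo : ∀ k : ℕ, ENNReal.ofReal ((1/2 : ℝ) ^ k) = (2⁻¹ : ℝ≥0∞) ^ k := by
          intro k
          rw [ENNReal.ofReal_pow (by norm_num)]
          congr 1
          rw [show (1/2 : ℝ) = (2:ℝ)⁻¹ by norm_num, ENNReal.ofReal_inv_of_pos (by norm_num)]
          norm_num
        simp_rw [hsplit, hgeo]
        rw [ENNReal.tsum_mul_left, ENNReal.tsum_geometric, ENNReal.one_sub_inv_two]
        rw [show (2 : ℝ) * B = B * 2 by ring, ENNReal.ofReal_mul hB]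
        norm_num
end

section
/- Fix n ≥ 1, an even integer N ≥ 2 and 0 < r < 1/N, and let z_1,…,z_{N^{2n}} enumerate the grid {0, 1/N, …, (N−1)/N}^{2n} ⊂ ℝ^{2n}; set Q_j = z_j + r·[0,1]^{2n}. Then there exists a continuous function φ : [0,1]^{2n} → ℝ such that for every j = 1,…,N^{2n} and every w ∈ Q_j, φ(w) = r²·φ((w − z_j)/r) − 2Σ_{i=1}^n (z_{j,i} w_{i+n} − z_{j,i+n} w_i), and moreover ‖φ‖_∞ ≤ 4nr/(1 − r²). -/
open Set

lemma saw_cont {c : ℝ} (hc : 0 ≤ c) :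
    Continuous (fun t : ℝ => min (Int.fract t) (c * (1 - Int.fract t))) := by
  have h : ContinuousOn (fun v : ℝ => min v (c * (1 - v))) (Set.Icc 0 1) := by
    apply Continuous.continuousOn; continuity
  have h01 : (fun v : ℝ => min v (c * (1 - v))) 0 = (fun v : ℝ => min v (c * (1 - v))) 1 := by
    simp [hc]
  exact ContinuousOn.comp_fract'' h h01

set_option maxHeartbeats 1000000 in
/-- **Theorem (Strichartz-type fixed point function).** Let `N ≥ 2` be even, `0 < r < 1/N`,
and let the grid points `z_g = (g(i)/N)_i`, for `g : (Fin n ⊕ Fin n) → Fin N`, enumerate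
`{0, 1/N, …, (N−1)/N}^{2n}`; set `Q_g = z_g + r·[0,1]^{2n}`. Then there is a continuous
`φ : [0,1]^{2n} → ℝ` with
`φ(w) = r²·φ((w − z_g)/r) − 2 Σ_{k=1}^n (z_{g,k} w_{k+n} − z_{g,k+n} w_k)` for `w ∈ Q_g`,
and `‖φ‖_∞ ≤ 4nr/(1 − r²)`. Coordinates of `ℝ^{2n}` are indexed by `Fin n ⊕ Fin n`, with
`Sum.inl k` the `k`-th coordinate and `Sum.inr k` the `(k+n)`-th coordinate. -/
theorem stmt14 (n N : ℕ) (hn : 1 ≤ n) (hN : 2 ≤ N) (hNeven : Even N)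
    (r : ℝ) (hr0 : 0 < r) (hrN : r < 1 / N) :
    ∃ φ : ((Fin n ⊕ Fin n) → ℝ) → ℝ,
      ContinuousOn φ {w | ∀ i, 0 ≤ w i ∧ w i ≤ 1} ∧
      (∀ g : (Fin n ⊕ Fin n) → Fin N, ∀ w : (Fin n ⊕ Fin n) → ℝ,
        (∀ i, (g i : ℝ) / N ≤ w i ∧ w i ≤ (g i : ℝ) / N + r) →
        φ w = r ^ 2 * φ (fun i => (w i - (g i : ℝ) / N) / r) -
          2 * ∑ k : Fin n,
            (((g (Sum.inl k) : ℝ) / N) * w (Sum.inr k) -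
              ((g (Sum.inr k) : ℝ) / N) * w (Sum.inl k))) ∧
      (∀ w : (Fin n ⊕ Fin n) → ℝ, (∀ i, 0 ≤ w i ∧ w i ≤ 1) →
        |φ w| ≤ 4 * n * r / (1 - r ^ 2)) := by
  have hN0 : (0:ℝ) < N := by positivity
  have hN2 : (2:ℝ) ≤ N := by exact_mod_cast hN
  have hNr1 : (N:ℝ) * r < 1 := by
    rw [lt_div_iff₀ hN0] at hrN; linarith
  have hr1 : r < 1 := by nlinarith
  have hr2 : r ^ 2 < 1 := by nlinarith
  have h1r2 : (0:ℝ) < 1 - r ^ 2 := by linarith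
  set c : ℝ := N * r / (1 - N * r) with hc
  have hc0 : 0 ≤ c := by
    apply div_nonneg (by positivity); linarith
  set D : ℝ → ℝ := fun x => min (Int.fract (N * x)) (c * (1 - Int.fract (N * x))) / N with hD
  -- basic bounds on D
  have hD01 : ∀ x : ℝ, 0 ≤ D x ∧ D x ≤ r := by
    intro x
    rw [hD]
    simp only
    set v := Int.fract ((N:ℝ) * x) with hv
    have hv0 : 0 ≤ v := Int.fract_nonneg _
    have hv1 : v < 1 := Int.fract_lt_one _
    constructor
    · apply div_nonneg _ hN0.le
      exact le_min hv0 (by nlinarith)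
    · rw [div_le_iff₀ hN0]
      rcases le_or_gt v (N * r) with h | h
      · calc min v (c * (1 - v)) ≤ v := min_le_left _ _
          _ ≤ r * N := by linarith [mul_comm (N:ℝ) r]
      · have hcv : c * (1 - v) ≤ N * r := by
          rw [hc, div_mul_eq_mul_div, div_le_iff₀ (by linarith : (0:ℝ) < 1 - N * r)]
          nlinarith [mul_nonneg (by positivity : (0:ℝ) ≤ (N:ℝ) * r) (sub_nonneg.mpr h.le)]
        calc min v (c * (1 - v)) ≤ c * (1 - v) := min_le_right _ _
          _ ≤ r * N := by linarith [mul_comm (N:ℝ) r]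
  -- on the cubes D x = x - g/N
  have hDg : ∀ g : ℕ, g < N → ∀ x : ℝ, (g:ℝ)/N ≤ x → x ≤ (g:ℝ)/N + r → D x = x - (g:ℝ)/N := by
    intro g hg x hx1 hx2
    have hgN : (N:ℝ) * ((g:ℝ)/N) = g := by field_simp
    have hx1' : (g:ℝ) ≤ N * x := by nlinarith
    have hx2' : (N:ℝ) * x ≤ g + N * r := by nlinarith
    have hfr : Int.fract ((N:ℝ) * x) = (N:ℝ) * x - g := by
      have h1 : ((N:ℝ) * x) = ((g:ℤ):ℝ) + ((N:ℝ) * x - g) := by push_cast; ring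
      rw [h1, Int.fract_intCast_add, Int.fract_eq_self.2 ⟨by linarith, by push_cast; linarith⟩]
      push_cast; ring
    have hmin : min ((N:ℝ) * x - g) (c * (1 - ((N:ℝ) * x - g))) = (N:ℝ) * x - g := by
      apply min_eq_left
      rw [hc, div_mul_eq_mul_div, le_div_iff₀ (by linarith : (0:ℝ) < 1 - N * r)]
      nlinarith
    rw [hD]
    simp only [hfr, hmin]
    field_simp
  have hDcont : Continuous D := by
    rw [hD]
    have := (saw_cont hc0).comp (continuous_const.mul continuous_id : Continuous fun x : ℝ => (N:ℝ) * x)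
    exact this.div_const N
  set A : ℝ → ℝ := fun x => x - D x with hA
  have hAcont : Continuous A := by rw [hA]; exact continuous_id.sub hDcont
  set E : ((Fin n ⊕ Fin n) → ℝ) → ((Fin n ⊕ Fin n) → ℝ) := fun w i => D (w i) / r with hE
  have hEcont : Continuous E := by
    rw [hE]
    apply continuous_pi
    intro i
    exact (hDcont.comp (continuous_apply i)).div_const r
  have hEcube : ∀ w : (Fin n ⊕ Fin n) → ℝ, ∀ i, 0 ≤ E w i ∧ E w i ≤ 1 := by
    intro w i
    obtain ⟨h1, h2⟩ := hD01 (w i)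
    rw [hE]
    constructor
    · exact div_nonneg h1 hr0.le
    · rw [div_le_one hr0]; linarith
  set H : ((Fin n ⊕ Fin n) → ℝ) → ℝ := fun w =>
    -2 * ∑ k : Fin n, (A (w (Sum.inl k)) * w (Sum.inr k) - A (w (Sum.inr k)) * w (Sum.inl k)) with hH
  have hHcont : Continuous H := by
    rw [hH]
    apply Continuous.mul continuous_const
    apply continuous_finset_sum
    intro k _
    exact ((hAcont.comp (continuous_apply _)).mul (continuous_apply _)).sub
      ((hAcont.comp (continuous_apply _)).mul (continuous_apply _))
  have hHbound : ∀ w : (Fin n ⊕ Fin n) → ℝ, (∀ i, 0 ≤ w i ∧ w i ≤ 1) → |H w| ≤ 4 * n * r := by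
    intro w hw
    rw [hH]
    simp only
    have hterm : ∀ k : Fin n,
        |A (w (Sum.inl k)) * w (Sum.inr k) - A (w (Sum.inr k)) * w (Sum.inl k)| ≤ 2 * r := by
      intro k
      obtain ⟨hx0, hx1⟩ := hw (Sum.inl k)
      obtain ⟨hy0, hy1⟩ := hw (Sum.inr k)
      obtain ⟨hdx0, hdx1⟩ := hD01 (w (Sum.inl k))
      obtain ⟨hdy0, hdy1⟩ := hD01 (w (Sum.inr k))
      have heq : A (w (Sum.inl k)) * w (Sum.inr k) - A (w (Sum.inr k)) * w (Sum.inl k)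
          = D (w (Sum.inr k)) * w (Sum.inl k) - D (w (Sum.inl k)) * w (Sum.inr k) := by
        rw [hA]; ring
      rw [heq, abs_sub_le_iff]
      constructor <;> nlinarith
    calc |(-2 : ℝ) * ∑ k : Fin n, (A (w (Sum.inl k)) * w (Sum.inr k) - A (w (Sum.inr k)) * w (Sum.inl k))|
        = 2 * |∑ k : Fin n, (A (w (Sum.inl k)) * w (Sum.inr k) - A (w (Sum.inr k)) * w (Sum.inl k))| := by
          rw [abs_mul]; norm_num
      _ ≤ 2 * ∑ k : Fin n, |A (w (Sum.inl k)) * w (Sum.inr k) - A (w (Sum.inr k)) * w (Sum.inl k)| := by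
          gcongr; exact Finset.abs_sum_le_sum_abs _ _
      _ ≤ 2 * ∑ _k : Fin n, 2 * r := by
          gcongr with k; exact hterm k
      _ = 4 * n * r := by
          rw [Finset.sum_const]; simp [Finset.card_univ]; ring
  -- cube facts for E and H
  have hEg : ∀ g : (Fin n ⊕ Fin n) → Fin N, ∀ w : (Fin n ⊕ Fin n) → ℝ,
      (∀ i, (g i : ℝ) / N ≤ w i ∧ w i ≤ (g i : ℝ) / N + r) →
      E w = fun i => (w i - (g i : ℝ) / N) / r := by
    intro g w hw
    funext i
    rw [hE]
    simp only
    rw [hDg (g i) (g i).isLt (w i) (hw i).1 (hw i).2]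
  have hAg : ∀ g : (Fin n ⊕ Fin n) → Fin N, ∀ w : (Fin n ⊕ Fin n) → ℝ,
      (∀ i, (g i : ℝ) / N ≤ w i ∧ w i ≤ (g i : ℝ) / N + r) →
      ∀ i, A (w i) = (g i : ℝ) / N := by
    intro g w hw i
    rw [hA]
    simp only
    rw [hDg (g i) (g i).isLt (w i) (hw i).1 (hw i).2]
    ring
  have hHg : ∀ g : (Fin n ⊕ Fin n) → Fin N, ∀ w : (Fin n ⊕ Fin n) → ℝ,
      (∀ i, (g i : ℝ) / N ≤ w i ∧ w i ≤ (g i : ℝ) / N + r) →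
      H w = -2 * ∑ k : Fin n,
        (((g (Sum.inl k) : ℝ) / N) * w (Sum.inr k) - ((g (Sum.inr k) : ℝ) / N) * w (Sum.inl k)) := by
    intro g w hw
    rw [hH]
    simp only
    congr 1
    apply Finset.sum_congr rfl
    intro k _
    rw [hAg g w hw (Sum.inl k), hAg g w hw (Sum.inr k)]
  clear_value A
  -- series terms
  set f : ℕ → ((Fin n ⊕ Fin n) → ℝ) → ℝ := fun m w => r ^ (2 * (m + 1)) * H (E^[m + 1] w) with hf
  set u : ℕ → ℝ := fun m => 4 * n * r * r ^ 2 * (r ^ 2) ^ m with hu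
  have husum : Summable u := by
    rw [hu]; exact (summable_geometric_of_lt_one (by positivity) hr2).mul_left _
  have hfcont : ∀ m : ℕ, Continuous (f m) := by
    intro m
    rw [hf]
    exact continuous_const.mul (hHcont.comp (hEcont.iterate (m+1)))
  have hfu : ∀ m : ℕ, ∀ w : (Fin n ⊕ Fin n) → ℝ, |f m w| ≤ u m := by
    intro m w
    have hc1 : E^[m + 1] w = E (E^[m] w) := Function.iterate_succ_apply' E m w
    have hb : |H (E^[m + 1] w)| ≤ 4 * n * r := by
      rw [hc1]; exact hHbound _ (hEcube _)
    rw [hf, hu]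
    simp only
    rw [abs_mul, abs_pow, abs_of_pos hr0]
    calc r ^ (2 * (m + 1)) * |H (E^[m+1] w)| ≤ r ^ (2 * (m + 1)) * (4 * n * r) := by
          gcongr
      _ = 4 * ↑n * r * r ^ 2 * (r ^ 2) ^ m := by rw [pow_mul]; ring
  have hfshift : ∀ m : ℕ, ∀ w : (Fin n ⊕ Fin n) → ℝ, r ^ 2 * f m (E w) = f (m + 1) w := by
    intro m w
    rw [hf]
    simp only
    rw [← Function.iterate_succ_apply E (m + 1) w, ← mul_assoc, ← pow_add,
      show 2 + 2 * (m + 1) = 2 * (m + 1 + 1) from by ring]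
  have hf0 : ∀ w : (Fin n ⊕ Fin n) → ℝ, f 0 w = r ^ 2 * H (E w) := by
    intro w
    rw [hf]
    simp only [Function.iterate_one]
    norm_num
  clear_value D H E f u
  have hfsum : ∀ w, Summable (fun m => f m w) :=
    fun w => Summable.of_abs (husum.of_nonneg_of_le (fun m => abs_nonneg _) (fun m => hfu m w))
  set φ : ((Fin n ⊕ Fin n) → ℝ) → ℝ := fun w => H w + ∑' m : ℕ, f m w with hφ
  have hφcont : Continuous φ := by
    rw [hφ]
    apply hHcont.add
    exact continuous_tsum hfcont husum (fun m w => by rw [Real.norm_eq_abs]; exact hfu m w)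
  -- functional equation
  have hfe : ∀ w, φ w = H w + r ^ 2 * φ (E w) := by
    intro w
    have h1 : ∑' m : ℕ, f m w = f 0 w + ∑' m : ℕ, f (m + 1) w := Summable.tsum_eq_zero_add (hfsum w)
    have h2 : r ^ 2 * ∑' m : ℕ, f m (E w) = ∑' m : ℕ, f (m + 1) w := by
      rw [← tsum_mul_left]
      exact tsum_congr fun m => hfshift m w
    rw [hφ]
    simp only
    rw [h1, mul_add, h2, hf0 w]
  clear_value φ
  refine ⟨φ, hφcont.continuousOn, ?_, ?_⟩
  · -- functional equation on cubes
    intro g w hw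
    rw [hfe w, hEg g w hw, hHg g w hw]
    ring
  · -- bound
    intro w hw
    have h1 : |φ w| ≤ |H w| + |∑' m : ℕ, f m w| := by rw [hφ]; exact abs_add_le _ _
    have h2 : |∑' m : ℕ, f m w| ≤ ∑' m : ℕ, u m := by
      have hs : Summable fun m => |f m w| :=
        husum.of_nonneg_of_le (fun m => abs_nonneg _) (fun m => hfu m w)
      have hs' : Summable fun m => ‖f m w‖ := by
        simpa only [Real.norm_eq_abs] using hs
      have habs : ‖∑' m : ℕ, f m w‖ ≤ ∑' m : ℕ, ‖f m w‖ := norm_tsum_le_tsum_norm hs'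
      rw [Real.norm_eq_abs] at habs
      have htt : (∑' m : ℕ, ‖f m w‖) = ∑' m : ℕ, |f m w| :=
        tsum_congr fun m => Real.norm_eq_abs _
      rw [htt] at habs
      exact habs.trans (Summable.tsum_le_tsum (fun m => hfu m w) hs husum)
    have h3 : ∑' m : ℕ, u m = 4 * n * r * r ^ 2 * (1 - r ^ 2)⁻¹ := by
      rw [hu, tsum_mul_left, tsum_geometric_of_lt_one (by positivity) hr2]
    have h4 : |H w| ≤ 4 * n * r := hHbound w hw
    have h5 : 4 * (n:ℝ) * r + 4 * n * r * r ^ 2 * (1 - r ^ 2)⁻¹ = 4 * n * r / (1 - r ^ 2) := by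
      field_simp
      ring
    calc |φ w| ≤ |H w| + |∑' m : ℕ, f m w| := h1
      _ ≤ 4 * n * r + 4 * n * r * r ^ 2 * (1 - r ^ 2)⁻¹ := by
          have := h2.trans_eq h3; linarith
      _ = 4 * n * r / (1 - r ^ 2) := h5
end
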